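/- arXiv:1201.2323 — 8 statements merged into one kernel-verified Lean document; each statement's English description precedes it below -/
import Mathlib

section
/- Let s ≥ 1 and u ∈ [0,1]. Then f_{u,s}(x) > 0 for every x ∈ (0,1) if and only if 3·s·u ≤ 1. -/
noncomputable def A (a b : ℝ) : ℝ := (a + b) / 2

noncomputable def G (a b : ℝ) : ℝ := Real.sqrt (a * b)

noncomputable def H (a b : ℝ) : ℝ := 2 * a * b / (a + b)

noncomputable def I (a b : ℝ) : ℝ :=
  (1 / Real.exp 1) * (a ^ a / b ^ b) ^ (1 / (a - b))

noncomputable def Q (t s a b : ℝ) : ℝ :=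
  G (t * a + (1 - t) * b) (t * b + (1 - t) * a) ^ s * A a b ^ (1 - s)

noncomputable def f (u s x : ℝ) : ℝ :=
  1 - (1 / (2 * x)) * Real.log ((1 + x) / (1 - x))
    - (1 / 2) * Real.log (1 - x ^ 2) + (s / 2) * Real.log (1 - u * x ^ 2)

noncomputable def h (u s x : ℝ) : ℝ :=
  -x + (1 / 2) * Real.log ((1 + x) / (1 - x)) - s * u * x ^ 3 / (1 - u * x ^ 2)

/-! ### Auxiliary lemmas -/

lemma aux_log_ratio {x : ℝ} (hx0 : 0 < x) (hx1 : x < 1) :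
    2*x + 2*x^3/3 ≤ Real.log (1+x) - Real.log (1-x) := by
  set ψ : ℝ → ℝ := fun y => Real.log (1+y) - Real.log (1-y) - 2*y - 2*y^3/3 with hψ
  have hd : ∀ y ∈ Set.Ico (0:ℝ) 1,
      HasDerivAt ψ (1/(1+y) - (-1)/(1-y) - 2 - 2*(3*y^2)/3) y := by
    intro y hy
    have h1 : (0:ℝ) < 1 + y := by linarith [hy.1]
    have h2 : (0:ℝ) < 1 - y := by linarith [hy.2]
    have d1 : HasDerivAt (fun y : ℝ => Real.log (1+y)) (1/(1+y)) y := by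
      simpa using (((hasDerivAt_id y).const_add 1).log h1.ne')
    have d2 : HasDerivAt (fun y : ℝ => Real.log (1-y)) ((-1)/(1-y)) y := by
      simpa using (((hasDerivAt_id y).const_sub 1).log h2.ne')
    have d3 : HasDerivAt (fun y : ℝ => 2*y) 2 y := by
      simpa using (hasDerivAt_id y).const_mul 2
    have d4 : HasDerivAt (fun y : ℝ => 2*y^3/3) (2*(3*y^2)/3) y := by
      simpa using ((hasDerivAt_pow 3 y).const_mul 2).div_const 3
    exact ((d1.sub d2).sub d3).sub d4
  have key : StrictMonoOn ψ (Set.Ico (0:ℝ) 1) := by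
    apply strictMonoOn_of_deriv_pos (convex_Ico 0 1)
    · exact fun y hy => (hd y hy).continuousAt.continuousWithinAt
    · intro y hy
      rw [interior_Ico] at hy
      obtain ⟨hy0, hy1⟩ := hy
      rw [(hd y ⟨hy0.le, hy1⟩).deriv]
      have h1 : (0:ℝ) < 1 + y := by linarith
      have h2 : (0:ℝ) < 1 - y := by linarith
      have : 1/(1+y) - (-1)/(1-y) - 2 - 2*(3*y^2)/3 = 2*y^4/((1+y)*(1-y)) := by
        field_simp; ring
      rw [this]; positivity
  have h0 : ψ 0 = 0 := by simp [hψ]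
  have := key (Set.left_mem_Ico.2 one_pos) ⟨hx0.le, hx1⟩ hx0
  rw [h0] at this
  simp only [hψ] at this
  linarith

noncomputable def phiF : ℝ → ℝ :=
  fun y => Real.log (1 - y^2/3) - Real.log (1 - y^2) - 2*y^2/(3 - y^2)

noncomputable def GF : ℝ → ℝ :=
  fun y => 2*y - (Real.log (1+y) - Real.log (1-y)) - y * Real.log (1 - y^2)
    + y * Real.log (1 - y^2/3)

lemma phiF_hasDeriv {y : ℝ} (hy0 : 0 ≤ y) (hy1 : y < 1) :
    HasDerivAt phiF (8*y^3/((1-y^2)*(3-y^2)^2)) y := by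
  have hy2 : y^2 < 1 := by nlinarith
  have h1 : (0:ℝ) < 1 - y^2/3 := by nlinarith
  have h2 : (0:ℝ) < 1 - y^2 := by nlinarith
  have h3 : (0:ℝ) < 3 - y^2 := by nlinarith
  have d1 : HasDerivAt (fun y : ℝ => Real.log (1 - y^2/3)) ((-(2*y/3))/(1 - y^2/3)) y := by
    have : HasDerivAt (fun y : ℝ => 1 - y^2/3) (-(2*y/3)) y := by
      simpa using ((hasDerivAt_pow 2 y).div_const 3).const_sub 1
    simpa using this.log h1.ne'
  have d2 : HasDerivAt (fun y : ℝ => Real.log (1 - y^2)) ((-(2*y))/(1 - y^2)) y := by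
    have : HasDerivAt (fun y : ℝ => 1 - y^2) (-(2*y)) y := by
      simpa using (hasDerivAt_pow 2 y).const_sub 1
    simpa using this.log h2.ne'
  have d3 : HasDerivAt (fun y : ℝ => 2*y^2/(3 - y^2))
      (((2*(2*y))*(3-y^2) - (2*y^2)*(-(2*y)))/(3-y^2)^2) y := by
    have hnum : HasDerivAt (fun y : ℝ => 2*y^2) (2*(2*y)) y := by
      simpa using (hasDerivAt_pow 2 y).const_mul 2
    have hden : HasDerivAt (fun y : ℝ => 3 - y^2) (-(2*y)) y := by
      simpa using (hasDerivAt_pow 2 y).const_sub 3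
    exact hnum.div hden h3.ne'
  have := (d1.sub d2).sub d3
  refine this.congr_deriv ?_
  field_simp [h1.ne', h2.ne', h3.ne']
  ring

lemma phiF_pos {x : ℝ} (hx0 : 0 < x) (hx1 : x < 1) : 0 < phiF x := by
  have key : StrictMonoOn phiF (Set.Ico (0:ℝ) 1) := by
    apply strictMonoOn_of_deriv_pos (convex_Ico 0 1)
    · exact fun y hy => (phiF_hasDeriv hy.1 hy.2).continuousAt.continuousWithinAt
    · intro y hy
      rw [interior_Ico] at hy
      rw [(phiF_hasDeriv hy.1.le hy.2).deriv]
      have h2 : (0:ℝ) < 1 - y^2 := by nlinarith [hy.1, hy.2]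
      have h3 : (0:ℝ) < 3 - y^2 := by nlinarith [hy.1, hy.2]
      have := hy.1
      positivity
  have h0 : phiF 0 = 0 := by simp [phiF]
  have := key (Set.left_mem_Ico.2 one_pos) ⟨hx0.le, hx1⟩ hx0
  rwa [h0] at this

lemma GF_hasDeriv {y : ℝ} (hy0 : 0 ≤ y) (hy1 : y < 1) :
    HasDerivAt GF (phiF y) y := by
  have hy2 : y^2 < 1 := by nlinarith
  have h1 : (0:ℝ) < 1 + y := by linarith
  have h2 : (0:ℝ) < 1 - y := by linarith
  have h3 : (0:ℝ) < 1 - y^2 := by nlinarith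
  have h4 : (0:ℝ) < 1 - y^2/3 := by nlinarith
  have d1 : HasDerivAt (fun y : ℝ => 2*y) 2 y := by
    simpa using (hasDerivAt_id y).const_mul 2
  have d2 : HasDerivAt (fun y : ℝ => Real.log (1+y)) (1/(1+y)) y := by
    simpa using (((hasDerivAt_id y).const_add 1).log h1.ne')
  have d3 : HasDerivAt (fun y : ℝ => Real.log (1-y)) ((-1)/(1-y)) y := by
    simpa using (((hasDerivAt_id y).const_sub 1).log h2.ne')
  have dl2 : HasDerivAt (fun y : ℝ => Real.log (1 - y^2)) ((-(2*y))/(1 - y^2)) y := by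
    have : HasDerivAt (fun y : ℝ => 1 - y^2) (-(2*y)) y := by
      simpa using (hasDerivAt_pow 2 y).const_sub 1
    simpa using this.log h3.ne'
  have dl1 : HasDerivAt (fun y : ℝ => Real.log (1 - y^2/3)) ((-(2*y/3))/(1 - y^2/3)) y := by
    have : HasDerivAt (fun y : ℝ => 1 - y^2/3) (-(2*y/3)) y := by
      simpa using ((hasDerivAt_pow 2 y).div_const 3).const_sub 1
    simpa using this.log h4.ne'
  have d4 : HasDerivAt (fun y : ℝ => y * Real.log (1 - y^2))
      (1 * Real.log (1 - y^2) + y * ((-(2*y))/(1 - y^2))) y :=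
    (hasDerivAt_id y).mul dl2
  have d5 : HasDerivAt (fun y : ℝ => y * Real.log (1 - y^2/3))
      (1 * Real.log (1 - y^2/3) + y * ((-(2*y/3))/(1 - y^2/3))) y :=
    (hasDerivAt_id y).mul dl1
  have := ((d1.sub (d2.sub d3)).sub d4).add d5
  refine this.congr_deriv ?_
  unfold phiF
  have h5 : (0:ℝ) < 3 - y^2 := by nlinarith
  field_simp [h1.ne', h2.ne', h3.ne', h4.ne', h5.ne']
  ring

lemma GF_pos {x : ℝ} (hx0 : 0 < x) (hx1 : x < 1) : 0 < GF x := by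
  have key : StrictMonoOn GF (Set.Ico (0:ℝ) 1) := by
    apply strictMonoOn_of_deriv_pos (convex_Ico 0 1)
    · exact fun y hy => (GF_hasDeriv hy.1 hy.2).continuousAt.continuousWithinAt
    · intro y hy
      rw [interior_Ico] at hy
      rw [(GF_hasDeriv hy.1.le hy.2).deriv]
      exact phiF_pos hy.1 hy.2
  have h0 : GF 0 = 0 := by simp [GF]
  have := key (Set.left_mem_Ico.2 one_pos) ⟨hx0.le, hx1⟩ hx0
  rwa [h0] at this

theorem stmt_2 (s u : ℝ) (hs : 1 ≤ s) (hu : u ∈ Set.Icc (0:ℝ) 1) :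
    (∀ x ∈ Set.Ioo (0:ℝ) 1, 0 < f u s x) ↔ 3 * s * u ≤ 1 := by
  obtain ⟨hu0, hu1⟩ := hu
  constructor
  · intro hf
    by_contra hcon
    push_neg at hcon
    set c : ℝ := 3*s*u - 1 with hc_def
    have hc0 : 0 < c := by simp only [hc_def]; linarith
    set x : ℝ := Real.sqrt (c/(c+3)) with hx_def
    have harg : 0 < c/(c+3) := by positivity
    have harg1 : c/(c+3) < 1 := by rw [div_lt_one (by linarith)]; linarith
    have hx2 : x^2 = c/(c+3) := Real.sq_sqrt harg.le
    have hx0 : 0 < x := Real.sqrt_pos.2 harg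
    have hxx : x^2 < 1 := by rw [hx2]; exact harg1
    have hx1 : x < 1 := by nlinarith
    have h1x : (0:ℝ) < 1 - x^2 := by linarith
    have hux0 : 0 < 1 - u*x^2 := by nlinarith
    have hA := aux_log_ratio hx0 hx1
    have hB : -Real.log (1 - x^2) ≤ x^2/(1-x^2) := by
      have h := Real.log_le_sub_one_of_pos (show (0:ℝ) < (1-x^2)⁻¹ by positivity)
      rw [Real.log_inv] at h
      have heq : (1-x^2)⁻¹ - 1 = x^2/(1-x^2) := by field_simp; ring
      linarith [heq ▸ h]
    have hC : Real.log (1 - u*x^2) ≤ -(u*x^2) := by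
      have := Real.log_le_sub_one_of_pos hux0
      linarith
    have hpos := hf x ⟨hx0, hx1⟩
    have hlog : Real.log ((1+x)/(1-x)) = Real.log (1+x) - Real.log (1-x) :=
      Real.log_div (by linarith) (by linarith)
    have h2xf : 2*x*f u s x = 2*x - (Real.log (1+x) - Real.log (1-x))
        - x*Real.log (1-x^2) + s*x*Real.log (1-u*x^2) := by
      simp only [f, hlog]; field_simp
    have hB' : -(x*Real.log (1-x^2)) ≤ x*(x^2/(1-x^2)) := by
      have := mul_le_mul_of_nonneg_left hB hx0.le
      linarith
    have hC' : s*x*Real.log (1-u*x^2) ≤ (s*x)*(-(u*x^2)) := by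
      have := mul_le_mul_of_nonneg_left hC (show (0:ℝ) ≤ s*x by positivity)
      linarith
    have hdiv : x^2/(1-x^2) = c/3 := by
      rw [hx2]
      have h3 : (0:ℝ) < c + 3 := by linarith
      rw [show 1 - c/(c+3) = 3/(c+3) by field_simp; ring]
      field_simp
    have hsu : s*u = (c+1)/3 := by simp only [hc_def]; ring
    have hfinal : 2*x - (2*x + 2*x^3/3) + x*(x^2/(1-x^2)) + (s*x)*(-(u*x^2)) = 0 := by
      rw [hdiv, show x^3 = x*x^2 by ring,
        show (s*x)*(-(u*x^2)) = -((s*u)*x*x^2) by ring, hsu, hx2]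
      have h3 : (0:ℝ) < c + 3 := by linarith
      field_simp
      ring
    have hupper : 2*x*f u s x ≤ 0 := by
      rw [h2xf]; linarith
    nlinarith [hpos, hx0]
  · intro hsu x hx
    obtain ⟨hx0, hx1⟩ := hx
    have hxx : x^2 < 1 := by nlinarith
    have hux0 : 0 < 1 - u*x^2 := by nlinarith
    have h13 : (0:ℝ) < 1 - x^2/3 := by nlinarith
    have hber : 1 + s*(-(u*x^2)) ≤ (1 + (-(u*x^2)))^s :=
      one_add_mul_self_le_rpow_one_add (by nlinarith) hs
    have hkey : Real.log (1 - x^2/3) ≤ s * Real.log (1 - u*x^2) := by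
      have h2 : Real.log (1 - x^2/3) ≤ Real.log ((1 - u*x^2)^s) := by
        rw [Real.log_le_log_iff h13 (Real.rpow_pos_of_pos hux0 s)]
        calc 1 - x^2/3 ≤ 1 + s*(-(u*x^2)) := by nlinarith
        _ ≤ (1 + (-(u*x^2)))^s := hber
        _ = (1 - u*x^2)^s := by ring_nf
      rwa [Real.log_rpow hux0] at h2
    have hG := GF_pos hx0 hx1
    have hlog : Real.log ((1+x)/(1-x)) = Real.log (1+x) - Real.log (1-x) :=
      Real.log_div (by linarith) (by linarith)
    have h2xf : 2*x*f u s x = 2*x - (Real.log (1+x) - Real.log (1-x))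
        - x*Real.log (1-x^2) + s*x*Real.log (1-u*x^2) := by
      simp only [f, hlog]; field_simp
    have hle : GF x ≤ 2*x*f u s x := by
      rw [h2xf]
      simp only [GF]
      have h1 := mul_le_mul_of_nonneg_left hkey hx0.le
      have h2 : x*(s*Real.log (1-u*x^2)) = s*x*Real.log (1-u*x^2) := by ring
      linarith
    nlinarith [hG, hle, hx0]
end

section
/- Let s ≥ 1 and u ∈ [0,1]. Then f_{u,s}(x) < 0 for every x ∈ (0,1) if and only if u + (2/e)^(2/s) ≥ 1. -/
open Real Set Filter Topology

lemma hasSum_h {u s x : ℝ} (hu0 : 0 ≤ u) (hu1 : u ≤ 1) (hx0 : 0 < x) (hx1 : x < 1) :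
    HasSum (fun k : ℕ => (1/(2*(k:ℝ)+3) - s*u^(k+1)) * x^(2*k+3)) (h u s x) := by
  have hxabs : |x| < 1 := by rw [abs_of_pos hx0]; exact hx1
  have h1x : (0:ℝ) < 1 - x := by linarith
  have h1x' : (0:ℝ) < 1 + x := by linarith
  have hux : u * x^2 < 1 := by nlinarith
  have hux0 : 0 ≤ u * x^2 := by positivity
  have hL := (hasSum_log_sub_log_of_abs_lt_one hxabs).div_const 2
  have hLdiv : HasSum (fun k : ℕ => (1/(2*(k:ℝ)+1)) * x ^ (2*k+1))
      ((1/2) * Real.log ((1+x)/(1-x))) := by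
    have e1 : (fun k : ℕ => (2 : ℝ) * (1 / (2 * (k:ℝ) + 1)) * x ^ (2 * k + 1) / 2)
        = (fun k : ℕ => (1/(2*(k:ℝ)+1)) * x ^ (2*k+1)) := by funext k; ring
    have e2 : (Real.log (1 + x) - Real.log (1 - x)) / 2
        = (1/2) * Real.log ((1+x)/(1-x)) := by
      rw [Real.log_div (by positivity) (by positivity)]; ring
    rwa [e1, e2] at hL
  have hp : HasSum (fun k : ℕ => (1/(2*(k:ℝ)+3)) * x ^ (2*k+3))
      ((1/2) * Real.log ((1+x)/(1-x)) - x) := by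
    have h2 := (hasSum_nat_add_iff' (f := fun k : ℕ => (1/(2*(k:ℝ)+1)) * x ^ (2*k+1)) 1).2 hLdiv
    simp only [Finset.range_one, Finset.sum_singleton, Nat.cast_zero] at h2
    have e1 : (fun k : ℕ => (1/(2*((k:ℝ)+1)+1)) * x ^ (2*(k+1)+1))
        = (fun k : ℕ => (1/(2*(k:ℝ)+3)) * x ^ (2*k+3)) := by
      funext k; norm_num; ring_nf
    have e2 : (1/(2*((0:ℝ))+1)) * x ^ (2*0+1) = x := by norm_num
    simp only [Nat.cast_add, Nat.cast_one] at h2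
    rw [e1] at h2
    rw [e2] at h2
    exact h2
  have hg : HasSum (fun k : ℕ => (u*x^2)^k) (1/(1 - u*x^2)) := by
    simpa [one_div] using hasSum_geometric_of_lt_one hux0 hux
  have hq : HasSum (fun k : ℕ => (s*u^((k:ℕ)+1)) * x ^ (2*k+3)) (s*u*x^3/(1 - u*x^2)) := by
    have h3 := hg.mul_left (s*u*x^3)
    have e1 : (fun k : ℕ => s*u*x^3 * (u*x^2)^k)
        = (fun k : ℕ => (s*u^((k:ℕ)+1)) * x ^ (2*k+3)) := by
      funext k; rw [mul_pow, ← pow_mul]; ring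
    have e2 : s*u*x^3 * (1/(1 - u*x^2)) = s*u*x^3/(1 - u*x^2) := by ring
    rwa [e1, e2] at h3
  have h4 := hp.sub hq
  have e1 : (fun k : ℕ => (1/(2*(k:ℝ)+3)) * x ^ (2*k+3) - (s*u^((k:ℕ)+1)) * x ^ (2*k+3))
      = (fun k : ℕ => (1/(2*(k:ℝ)+3) - s*u^(k+1)) * x^(2*k+3)) := by funext k; ring
  have e2 : (1/2) * Real.log ((1+x)/(1-x)) - x - s*u*x^3/(1 - u*x^2) = h u s x := by
    rw [h]; ring
  rwa [e1, e2] at h4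

lemma f_hasDerivAt {u s x : ℝ} (hu0 : 0 ≤ u) (hu1 : u ≤ 1) (hx0 : 0 < x) (hx1 : x < 1) :
    HasDerivAt (f u s) (h u s x / x^2) x := by
  have h1x : (0:ℝ) < 1 - x := by linarith
  have h1x' : (0:ℝ) < 1 + x := by linarith
  have hux : u * x^2 < 1 := by nlinarith
  have hx2 : (1:ℝ) - x^2 > 0 := by nlinarith
  have d1 : HasDerivAt (fun y : ℝ => (1+y)/(1-y)) (2/(1-x)^2) x := by
    have ha : HasDerivAt (fun y:ℝ => 1+y) 1 x := (hasDerivAt_id x).const_add 1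
    have hb : HasDerivAt (fun y:ℝ => 1-y) (-1) x := (hasDerivAt_id x).const_sub 1
    have := ha.fun_div hb (by positivity)
    refine this.congr_deriv ?_
    rw [eq_comm]
    field_simp
    ring
  have dL : HasDerivAt (fun y : ℝ => Real.log ((1+y)/(1-y)))
      ((2/(1-x)^2) / ((1+x)/(1-x))) x := d1.log (by positivity)
  have dInv : HasDerivAt (fun y : ℝ => 1/(2*y)) ((0*(2*x) - 1*(2*1))/(2*x)^2) x := by
    have hb : HasDerivAt (fun y:ℝ => 2*y) (2*1) x := (hasDerivAt_id x).const_mul 2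
    exact (hasDerivAt_const x 1).div hb (by positivity)
  have dA := dInv.mul dL
  have d2 : HasDerivAt (fun y : ℝ => Real.log (1 - y^2))
      ((-(((2:ℕ)) * x ^ (2-1))) / (1 - x^2)) x := by
    have := ((hasDerivAt_pow 2 x).const_sub 1).log (by positivity)
    simpa using this
  have d3 : HasDerivAt (fun y : ℝ => Real.log (1 - u * y^2))
      ((-(u * ((2:ℕ) * x ^ (2-1)))) / (1 - u * x^2)) x := by
    have h4 : (1:ℝ) - u*x^2 > 0 := by nlinarith
    have := (((hasDerivAt_pow 2 x).const_mul u).const_sub 1).log (ne_of_gt h4)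
    simpa using this
  have dF := ((dA.const_sub 1).sub (d2.const_mul (1/2))).add (d3.const_mul (s/2))
  have : f u s = fun y : ℝ =>
      (1 - (1/(2*y)) * Real.log ((1+y)/(1-y))) - (1/2) * Real.log (1 - y^2)
        + (s/2) * Real.log (1 - u * y^2) := by
    funext y; rw [f]
  rw [this]
  refine dF.congr_deriv ?_
  rw [eq_comm, h]
  have hxne : x ≠ 0 := ne_of_gt hx0
  have h1 : (1:ℝ) - x ≠ 0 := ne_of_gt h1x
  have h2 : (1:ℝ) + x ≠ 0 := by positivity
  have h3 : (1:ℝ) - x^2 ≠ 0 := ne_of_gt hx2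
  have h4 : (1:ℝ) - u*x^2 ≠ 0 := by nlinarith
  field_simp
  ring

lemma tendsto_f_zero (u s : ℝ) (hu0 : 0 ≤ u) (hu1 : u ≤ 1) :
    Tendsto (f u s) (𝓝[>] (0:ℝ)) (𝓝 0) := by
  set L : ℝ → ℝ := fun y => Real.log ((1+y)/(1-y)) with hLdef
  have dL : HasDerivAt L 2 0 := by
    have d1 : HasDerivAt (fun y : ℝ => (1+y)/(1-y)) 2 (0:ℝ) := by
      have ha : HasDerivAt (fun y:ℝ => 1+y) 1 (0:ℝ) := (hasDerivAt_id 0).const_add 1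
      have hb : HasDerivAt (fun y:ℝ => 1-y) (-1) (0:ℝ) := (hasDerivAt_id 0).const_sub 1
      have := ha.fun_div hb (by norm_num)
      exact this.congr_deriv (by norm_num)
    have := d1.log (by norm_num)
    convert this using 1
    norm_num
  have hslope := hasDerivAt_iff_tendsto_slope.1 dL
  have hmono : 𝓝[>] (0:ℝ) ≤ 𝓝[≠] (0:ℝ) :=
    nhdsWithin_mono _ (fun x hx => ne_of_gt hx)
  have hT := hslope.mono_left hmono
  have T1 : Tendsto (fun x : ℝ => (1/(2*x)) * L x) (𝓝[>] (0:ℝ)) (𝓝 1) := by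
    have := hT.div_const 2
    norm_num at this
    refine this.congr' ?_
    filter_upwards [self_mem_nhdsWithin] with x hx
    have hx0 : x ≠ 0 := ne_of_gt hx
    rw [slope_def_field, show L 0 = 0 by simp [hLdef], sub_zero, sub_zero]
    ring
  have T2 : Tendsto (fun x : ℝ => Real.log (1 - x^2)) (𝓝[>] (0:ℝ)) (𝓝 0) := by
    have : ContinuousAt (fun x : ℝ => Real.log (1 - x^2)) 0 := by
      apply ContinuousAt.log
      · fun_prop
      · norm_num
    simpa using this.tendsto.mono_left nhdsWithin_le_nhds
  have T3 : Tendsto (fun x : ℝ => Real.log (1 - u*x^2)) (𝓝[>] (0:ℝ)) (𝓝 0) := by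
    have : ContinuousAt (fun x : ℝ => Real.log (1 - u*x^2)) 0 := by
      apply ContinuousAt.log
      · fun_prop
      · norm_num
    simpa using this.tendsto.mono_left nhdsWithin_le_nhds
  have hfeq : f u s = fun x => 1 - (1/(2*x)) * L x - (1/2) * Real.log (1-x^2)
      + (s/2) * Real.log (1-u*x^2) := by
    funext y; rw [f]
  rw [hfeq]
  have := ((tendsto_const_nhds (x := (1:ℝ)) (f := 𝓝[>] (0:ℝ))).sub T1).sub
      (T2.const_mul (1/2)) |>.add (T3.const_mul (s/2))
  norm_num at this
  convert this using 2
  ring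

lemma tendsto_f_one (u s : ℝ) (hu0 : 0 ≤ u) (hu1 : u < 1) :
    Tendsto (f u s) (𝓝[<] (1:ℝ)) (𝓝 (1 - Real.log 2 + (s/2) * Real.log (1-u))) := by
  set F : ℝ → ℝ := fun x => 1 - (1/(2*x)) * Real.log (1+x) - (1/2) * Real.log (1+x)
      + (1/(2*x)) * ((1-x) * Real.log (1-x)) + (s/2) * Real.log (1-u*x^2) with hFdef
  have hcont : ContinuousAt F 1 := by
    have c1 : ContinuousAt (fun x : ℝ => 1/(2*x)) 1 := by
      apply ContinuousAt.div continuousAt_const (by fun_prop) (by norm_num)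
    have c2 : ContinuousAt (fun x : ℝ => Real.log (1+x)) 1 := by
      apply ContinuousAt.log (by fun_prop) (by norm_num)
    have c3 : ContinuousAt (fun x : ℝ => (1-x) * Real.log (1-x)) 1 := by
      exact (Real.continuous_mul_log.comp (by fun_prop : Continuous fun x : ℝ => 1-x)).continuousAt
    have c4 : ContinuousAt (fun x : ℝ => Real.log (1-u*x^2)) 1 := by
      apply ContinuousAt.log (by fun_prop)
      norm_num
      linarith
    exact ((((continuousAt_const.sub (c1.mul c2)).sub (continuousAt_const.mul c2)).add
      (c1.mul c3)).add (continuousAt_const.mul c4))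
  have hFval : F 1 = 1 - Real.log 2 + (s/2) * Real.log (1-u) := by
    simp [hFdef]
    norm_num
    ring
  have hT : Tendsto F (𝓝[<] (1:ℝ)) (𝓝 (1 - Real.log 2 + (s/2) * Real.log (1-u))) := by
    rw [← hFval]
    exact hcont.tendsto.mono_left nhdsWithin_le_nhds
  refine hT.congr' ?_
  filter_upwards [Ioo_mem_nhdsLT_of_mem (show (1:ℝ) ∈ Ioc (0:ℝ) 1 by norm_num)] with x hx
  obtain ⟨hx0, hx1⟩ := hx
  have h1x : (0:ℝ) < 1 - x := by linarith
  have h1x' : (0:ℝ) < 1 + x := by linarith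
  rw [hFdef, f]
  have e1 : Real.log ((1+x)/(1-x)) = Real.log (1+x) - Real.log (1-x) :=
    Real.log_div (by positivity) (by positivity)
  have e2 : Real.log (1-x^2) = Real.log (1-x) + Real.log (1+x) := by
    rw [show (1:ℝ)-x^2 = (1-x)*(1+x) by ring, Real.log_mul (ne_of_gt h1x) (ne_of_gt h1x')]
  rw [e1, e2]
  have hx0' : x ≠ 0 := ne_of_gt hx0
  field_simp
  ring

lemma exists_M {s u : ℝ} (hs : 1 ≤ s) (hu0 : 0 < u) (hu1 : u < 1) (h13 : 1/3 < s*u) :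
    ∃ M : ℕ, (∀ k ≤ M, 1/(2*(k:ℝ)+3) - s*u^(k+1) < 0) ∧
      (∀ k, M < k → 0 ≤ 1/(2*(k:ℝ)+3) - s*u^(k+1)) := by
  have hs0 : (0:ℝ) < s := by linarith
  set D : ℕ → ℝ := fun k => s * u^(k+1) * (2*(k:ℝ)+3) with hD
  have hDpos : ∀ k, 0 < D k := by
    intro k
    have : (0:ℝ) < 2*(k:ℝ)+3 := by positivity
    positivity
  have hCD : ∀ k : ℕ, (1/(2*(k:ℝ)+3) - s*u^(k+1) < 0 ↔ 1 < D k) := by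
    intro k
    have h3 : (0:ℝ) < 2*(k:ℝ)+3 := by positivity
    rw [sub_neg, div_lt_iff₀ h3, hD]
  have hD0 : 1 < D 0 := by
    rw [hD]; push_cast; nlinarith
  -- D tends to zero
  have hDto : Tendsto D atTop (𝓝 0) := by
    have h1 : Tendsto (fun k : ℕ => (k:ℝ)^1 * u^k) atTop (𝓝 0) :=
      (summable_pow_mul_geometric_of_norm_lt_one (R := ℝ) 1
        (by rw [Real.norm_eq_abs, abs_of_pos hu0]; exact hu1)).tendsto_atTop_zero
    have h2 : Tendsto (fun k : ℕ => u^k) atTop (𝓝 0) :=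
      tendsto_pow_atTop_nhds_zero_of_lt_one (le_of_lt hu0) hu1
    have h3 := ((h1.const_mul (2*s*u)).add (h2.const_mul (3*s*u)))
    rw [mul_zero, mul_zero, add_zero] at h3
    refine h3.congr (fun k => ?_)
    rw [hD]
    rw [pow_succ']
    push_cast
    ring
  obtain ⟨K, hK⟩ := eventually_atTop.1 (hDto.eventually_lt_const one_pos)
  set S : Set ℕ := {k : ℕ | 1 < D k} with hS
  have hSne : S.Nonempty := ⟨0, hD0⟩
  have hSbdd : BddAbove S := by
    refine ⟨K, fun k hk => ?_⟩
    by_contra hcon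
    exact absurd hk (not_lt.2 (le_of_lt (hK k (le_of_lt (lt_of_not_ge hcon)))))
  set M := sSup S with hM
  have hMS : M ∈ S := Nat.sSup_mem hSne hSbdd
  -- step lemmas
  have hstep : ∀ i : ℕ, 0 ≤ u*(2*(i:ℝ)+5) - (2*(i:ℝ)+3) → D i ≤ D (i+1) := by
    intro i hi
    have hup : (0:ℝ) < u^(i+1) := pow_pos hu0 _
    have : D (i+1) - D i = s * u^(i+1) * (u*(2*(i:ℝ)+5) - (2*(i:ℝ)+3)) := by
      rw [hD]; push_cast; ring
    nlinarith [mul_nonneg (mul_nonneg hs0.le hup.le) hi]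
  have hstep' : ∀ i : ℕ, u*(2*(i:ℝ)+5) - (2*(i:ℝ)+3) ≤ 0 → D (i+1) ≤ D i := by
    intro i hi
    have hup : (0:ℝ) < u^(i+1) := pow_pos hu0 _
    have : D (i+1) - D i = s * u^(i+1) * (u*(2*(i:ℝ)+5) - (2*(i:ℝ)+3)) := by
      rw [hD]; push_cast; ring
    nlinarith [mul_nonpos_of_nonneg_of_nonpos (mul_nonneg hs0.le hup.le) hi]
  have hanti : ∀ i j : ℕ, i ≤ j → u*(2*(j:ℝ)+5) - (2*(j:ℝ)+3) ≤ u*(2*(i:ℝ)+5) - (2*(i:ℝ)+3) := by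
    intro i j hij
    have : (i:ℝ) ≤ (j:ℝ) := Nat.cast_le.2 hij
    nlinarith
  -- increasing up to k if f k ≥ 0
  have hincr : ∀ k : ℕ, 0 ≤ u*(2*(k:ℝ)+5) - (2*(k:ℝ)+3) → D 0 ≤ D k := by
    intro k
    induction k with
    | zero => intro _; exact le_refl _
    | succ n ih =>
      intro hk
      have h0n : 0 ≤ u*(2*(n:ℝ)+5) - (2*(n:ℝ)+3) := by
        have := hanti n (n+1) (Nat.le_succ n)
        push_cast at this hk ⊢
        linarith
      exact le_trans (ih h0n) (hstep n h0n)
  have hdecr : ∀ k d : ℕ, u*(2*(k:ℝ)+5) - (2*(k:ℝ)+3) ≤ 0 → D (k+d) ≤ D k := by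
    intro k d hk
    induction d with
    | zero => exact le_refl _
    | succ n ih =>
      have : u*(2*((k+n:ℕ):ℝ)+5) - (2*((k+n:ℕ):ℝ)+3) ≤ 0 :=
        le_trans (hanti k (k+n) (Nat.le_add_right _ _)) hk
      exact le_trans (hstep' (k+n) this) ih
  refine ⟨M, fun k hk => ?_, fun k hk => ?_⟩
  · rw [hCD]
    by_cases hcase : 0 ≤ u*(2*(k:ℝ)+5) - (2*(k:ℝ)+3)
    · exact lt_of_lt_of_le hD0 (hincr k hcase)
    · have h1 : D (k + (M - k)) ≤ D k := hdecr k (M-k) (le_of_lt (lt_of_not_ge hcase))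
      rw [Nat.add_sub_cancel' hk] at h1
      exact lt_of_lt_of_le hMS h1
  · by_contra hcon
    have : k ∈ S := by rw [hS, Set.mem_setOf_eq, ← hCD]; linarith [lt_of_not_ge hcon]
    exact absurd (le_csSup hSbdd this) (not_le.2 hk)

lemma h_ratio_mono {u s : ℝ} {M : ℕ} (hu0 : 0 ≤ u) (hu1 : u ≤ 1)
    (hneg : ∀ k ≤ M, 1/(2*(k:ℝ)+3) - s*u^(k+1) < 0)
    (hpos : ∀ k, M < k → 0 ≤ 1/(2*(k:ℝ)+3) - s*u^(k+1))
    {x y : ℝ} (hx0 : 0 < x) (hxy : x < y) (hy1 : y < 1) :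
    h u s x / x^(2*M+5) < h u s y / y^(2*M+5) := by
  have hy0 : 0 < y := lt_trans hx0 hxy
  have hx1 : x < 1 := lt_trans hxy hy1
  have hfx := (hasSum_h (s := s) hu0 hu1 hx0 hx1).div_const (x^(2*M+5))
  have hfy := (hasSum_h (s := s) hu0 hu1 hy0 hy1).div_const (y^(2*M+5))
  have hxne : x ≠ 0 := ne_of_gt hx0
  have hyne : y ≠ 0 := ne_of_gt hy0
  set C : ℕ → ℝ := fun k => 1/(2*(k:ℝ)+3) - s*u^(k+1) with hC
  have key : ∀ k : ℕ, C k * x^(2*k+3) / x^(2*M+5) ≤ C k * y^(2*k+3) / y^(2*M+5) ∧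
      (k ≤ M → C k * x^(2*k+3) / x^(2*M+5) < C k * y^(2*k+3) / y^(2*M+5)) := by
    intro k
    by_cases hk : k ≤ M
    · have hCk : C k < 0 := hneg k hk
      have hsplit : 2*M+5 = (2*k+3) + (2*(M-k)+2) := by omega
      have ex : C k * x^(2*k+3) / x^(2*M+5) = C k / x^(2*(M-k)+2) := by
        rw [hsplit, pow_add]; field_simp; ring
      have ey : C k * y^(2*k+3) / y^(2*M+5) = C k / y^(2*(M-k)+2) := by
        rw [hsplit, pow_add]; field_simp; ring
      have hlt : C k / x^(2*(M-k)+2) < C k / y^(2*(M-k)+2) := by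
        rw [div_lt_div_iff₀ (by positivity) (by positivity)]
        have hpow : x^(2*(M-k)+2) < y^(2*(M-k)+2) :=
          pow_lt_pow_left₀ hxy (le_of_lt hx0) (by omega)
        nlinarith
      rw [ex, ey]
      exact ⟨le_of_lt hlt, fun _ => hlt⟩
    · push_neg at hk
      have hCk : 0 ≤ C k := hpos k hk
      have hsplit : 2*k+3 = (2*M+5) + (2*(k-M)-2) := by omega
      have ex : C k * x^(2*k+3) / x^(2*M+5) = C k * x^(2*(k-M)-2) := by
        rw [hsplit, pow_add]; field_simp
      have ey : C k * y^(2*k+3) / y^(2*M+5) = C k * y^(2*(k-M)-2) := by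
        rw [hsplit, pow_add]; field_simp
      rw [ex, ey]
      refine ⟨mul_le_mul_of_nonneg_left (pow_le_pow_left₀ (le_of_lt hx0) (le_of_lt hxy) _) hCk,
        fun hkM => absurd hkM (by omega)⟩
  exact hasSum_lt (fun k => (key k).1) ((key 0).2 (Nat.zero_le M)) hfx hfy

lemma E_pos {s : ℝ} (hs : 1 ≤ s) : 0 < (2 / Real.exp 1) ^ ((2:ℝ)/s) := by
  apply Real.rpow_pos_of_pos
  positivity

lemma E_lt_one {s : ℝ} (hs : 1 ≤ s) : (2 / Real.exp 1) ^ ((2:ℝ)/s) < 1 := by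
  have he : (2:ℝ) < Real.exp 1 := by
    have := Real.exp_one_gt_d9
    linarith
  apply Real.rpow_lt_one (by positivity)
  · rw [div_lt_one (by positivity)]; exact he
  · positivity

lemma log_E {s : ℝ} (hs : 1 ≤ s) :
    Real.log ((2 / Real.exp 1) ^ ((2:ℝ)/s)) = (2/s) * (Real.log 2 - 1) := by
  rw [Real.log_rpow (by positivity), Real.log_div (by norm_num) (Real.exp_ne_zero 1),
    Real.log_exp]

lemma su_third {s u : ℝ} (hs : 1 ≤ s) (hu : 1 - (2 / Real.exp 1) ^ ((2:ℝ)/s) ≤ u) :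
    1/3 < s * u := by
  have hs0 : (0:ℝ) < s := by linarith
  have hlog2 : Real.log 2 < 3/4 := by
    have := Real.log_two_lt_d9; linarith
  have hlog2' : (0:ℝ) < Real.log 2 := Real.log_pos (by norm_num)
  set c : ℝ := 1 - Real.log 2 with hc
  have hc14 : 1/4 < c := by rw [hc]; linarith
  have hc1 : c < 1 := by rw [hc]; linarith
  set T : ℝ := 2/s * c with hT
  have hT0 : 0 < T := by positivity
  have hE : (2 / Real.exp 1) ^ ((2:ℝ)/s) = Real.exp (-T) := by
    rw [← Real.log_exp (-T)] at *
    rw [← Real.exp_log (show (0:ℝ) < (2 / Real.exp 1) ^ ((2:ℝ)/s) from E_pos hs), log_E hs]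
    congr 1
    rw [Real.log_exp, hT, hc]
    ring
  have hexp : Real.exp (-T) ≤ 1/(1+T) := by
    have h1 : 1 + T ≤ Real.exp T := Real.add_one_le_exp T |>.trans_eq' (by ring)
    rw [Real.exp_neg, inv_eq_one_div, div_le_div_iff₀ (Real.exp_pos T) (by positivity)]
    nlinarith [Real.exp_pos T]
  have hu' : 1 - 1/(1+T) ≤ u := by
    rw [hE] at hu
    linarith
  have h1 : T/(1+T) ≤ u := by
    have : 1 - 1/(1+T) = T/(1+T) := by field_simp; ring
    linarith [this ▸ hu']
  have h2 : s * (T/(1+T)) ≤ s * u := mul_le_mul_of_nonneg_left h1 (le_of_lt hs0)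
  have h3 : s * (T/(1+T)) = 2*c/(1+T) := by
    rw [hT]; field_simp
  have hTle : T ≤ 2*c := by
    rw [hT]
    have h2s : 2/s ≤ 2 := by
      rw [div_le_iff₀ hs0]; linarith
    nlinarith
  have h4 : 2*c/(1+2*c) ≤ 2*c/(1+T) := by
    apply div_le_div_of_nonneg_left (by linarith) (by linarith) (by linarith)
  have h5 : 1/3 < 2*c/(1+2*c) := by
    rw [lt_div_iff₀ (by linarith)]
    linarith
  linarith [h3 ▸ h2]

lemma L_nonpos {s u : ℝ} (hs : 1 ≤ s) (hu1 : u < 1)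
    (hcond : 1 ≤ u + (2 / Real.exp 1) ^ ((2:ℝ)/s)) :
    1 - Real.log 2 + (s/2) * Real.log (1-u) ≤ 0 := by
  have hs0 : (0:ℝ) < s := by linarith
  have h1u : (0:ℝ) < 1 - u := by linarith
  have h1 : 1 - u ≤ (2 / Real.exp 1) ^ ((2:ℝ)/s) := by linarith
  have h2 : Real.log (1-u) ≤ (2/s) * (Real.log 2 - 1) := by
    rw [← log_E hs]
    exact Real.log_le_log h1u h1
  have h3 : (s/2) * Real.log (1-u) ≤ (s/2) * ((2/s) * (Real.log 2 - 1)) :=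
    mul_le_mul_of_nonneg_left h2 (by positivity)
  have h4 : (s/2) * ((2/s) * (Real.log 2 - 1)) = Real.log 2 - 1 := by
    field_simp
  linarith


lemma f_cont {u s : ℝ} (hu0 : 0 ≤ u) (hu1 : u ≤ 1) {z : ℝ} (hz0 : 0 < z) (hz1 : z < 1) :
    ContinuousAt (f u s) z :=
  (f_hasDerivAt hu0 hu1 hz0 hz1).differentiableAt.continuousAt

lemma f_strictAntiOn {u s : ℝ} (hu0 : 0 ≤ u) (hu1 : u ≤ 1) {a b : ℝ}
    (ha : 0 < a) (hab : a < b) (hb : b < 1)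
    (hneg : ∀ z, a < z → z < b → h u s z < 0) : f u s b < f u s a := by
  have hanti : StrictAntiOn (f u s) (Icc a b) := by
    apply strictAntiOn_of_deriv_neg (convex_Icc a b)
    · intro z hz
      exact (f_cont hu0 hu1 (lt_of_lt_of_le ha hz.1) (lt_of_le_of_lt hz.2 hb)).continuousWithinAt
    · intro z hz
      rw [interior_Icc] at hz
      have hz0 : 0 < z := lt_trans ha hz.1
      have hz1 : z < 1 := lt_trans hz.2 hb
      rw [(f_hasDerivAt hu0 hu1 hz0 hz1).deriv]
      exact div_neg_of_neg_of_pos (hneg z hz.1 hz.2) (by positivity)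
  exact hanti (left_mem_Icc.2 (le_of_lt hab)) (right_mem_Icc.2 (le_of_lt hab)) hab

lemma f_strictMonoOn {u s : ℝ} (hu0 : 0 ≤ u) (hu1 : u ≤ 1) {a b : ℝ}
    (ha : 0 < a) (hab : a < b) (hb : b < 1)
    (hpos : ∀ z, a < z → z < b → 0 < h u s z) : f u s a < f u s b := by
  have hmono : StrictMonoOn (f u s) (Icc a b) := by
    apply strictMonoOn_of_deriv_pos (convex_Icc a b)
    · intro z hz
      exact (f_cont hu0 hu1 (lt_of_lt_of_le ha hz.1) (lt_of_le_of_lt hz.2 hb)).continuousWithinAt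
    · intro z hz
      rw [interior_Icc] at hz
      have hz0 : 0 < z := lt_trans ha hz.1
      have hz1 : z < 1 := lt_trans hz.2 hb
      rw [(f_hasDerivAt hu0 hu1 hz0 hz1).deriv]
      exact div_pos (hpos z hz.1 hz.2) (by positivity)
  exact hmono (left_mem_Icc.2 (le_of_lt hab)) (right_mem_Icc.2 (le_of_lt hab)) hab

lemma f_neg_of_h_neg {u s : ℝ} (hu0 : 0 ≤ u) (hu1 : u ≤ 1) {x : ℝ}
    (hx0 : 0 < x) (hx1 : x < 1)
    (hneg : ∀ z, 0 < z → z ≤ x → h u s z < 0) : f u s x < 0 := by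
  have hx2 : 0 < x/2 := by linarith
  have hx2' : x/2 < x := by linarith
  have h1 : f u s x < f u s (x/2) :=
    f_strictAntiOn hu0 hu1 hx2 hx2' hx1
      (fun z hz1 hz2 => hneg z (lt_trans hx2 hz1) (le_of_lt hz2))
  have h2 : f u s (x/2) ≤ 0 := by
    refine ge_of_tendsto (tendsto_f_zero u s hu0 hu1) ?_
    filter_upwards [Ioo_mem_nhdsGT_of_mem
      (show (0:ℝ) ∈ Ico (0:ℝ) (x/2) by constructor <;> [exact le_refl 0; exact hx2])] with z hz
    exact le_of_lt (f_strictAntiOn hu0 hu1 hz.1 hz.2 (by linarith)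
      (fun w hw1 hw2 => hneg w (lt_trans hz.1 hw1) (by linarith)))
  linarith

lemma f_neg_of_h_pos {u s : ℝ} (hs : 1 ≤ s) (hu0 : 0 ≤ u) (hu1 : u < 1) {x : ℝ}
    (hx0 : 0 < x) (hx1 : x < 1)
    (hcond : 1 ≤ u + (2 / Real.exp 1) ^ ((2:ℝ)/s))
    (hpos : ∀ z, x < z → z < 1 → 0 < h u s z) : f u s x < 0 := by
  set y : ℝ := (x+1)/2 with hy
  have hy0 : x < y := by rw [hy]; linarith
  have hy1 : y < 1 := by rw [hy]; linarith
  have h1 : f u s x < f u s y :=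
    f_strictMonoOn hu0 (le_of_lt hu1) hx0 hy0 hy1 (fun z hz1 hz2 => hpos z hz1 (by linarith))
  have h2 : f u s y ≤ 1 - Real.log 2 + (s/2) * Real.log (1-u) := by
    refine ge_of_tendsto (tendsto_f_one u s hu0 hu1) ?_
    filter_upwards [Ioo_mem_nhdsLT_of_mem
      (show (1:ℝ) ∈ Ioc y 1 by constructor <;> [exact hy1; exact le_refl 1])] with z hz
    exact le_of_lt (f_strictMonoOn hu0 (le_of_lt hu1) (lt_trans hx0 hy0) hz.1 hz.2
      (fun w hw1 hw2 => hpos w (lt_trans hy0 hw1) (lt_trans hw2 hz.2)))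
  have h3 := L_nonpos hs hu1 hcond
  linarith

theorem stmt_3 (s u : ℝ) (hs : 1 ≤ s) (hu : u ∈ Set.Icc (0:ℝ) 1) :
    (∀ x ∈ Set.Ioo (0:ℝ) 1, f u s x < 0) ↔ 1 ≤ u + (2 / Real.exp 1) ^ ((2:ℝ)/s) := by
  obtain ⟨hu0, hu1⟩ := hu
  constructor
  · intro hf
    by_contra hcon
    push_neg at hcon
    have hE := E_pos hs
    have hu1' : u < 1 := by linarith
    have hs0 : (0:ℝ) < s := by linarith
    have hL : 0 < 1 - Real.log 2 + (s/2) * Real.log (1-u) := by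
      have h1 : (2/Real.exp 1)^((2:ℝ)/s) < 1 - u := by linarith
      have h2 : (2/s) * (Real.log 2 - 1) < Real.log (1-u) := by
        rw [← log_E hs]
        exact Real.log_lt_log (E_pos hs) h1
      have h3 : (s/2) * ((2/s)*(Real.log 2 - 1)) < (s/2) * Real.log (1-u) :=
        mul_lt_mul_of_pos_left h2 (by positivity)
      have h4 : (s/2) * ((2/s) * (Real.log 2 - 1)) = Real.log 2 - 1 := by
        field_simp
      linarith
    have hev : ∀ᶠ x in 𝓝[<] (1:ℝ), 0 < f u s x :=
      (tendsto_f_one u s hu0 hu1').eventually_const_lt hL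
    have hev2 : ∀ᶠ x in 𝓝[<] (1:ℝ), x ∈ Set.Ioo (0:ℝ) 1 := by
      filter_upwards [Ioo_mem_nhdsLT_of_mem (show (1:ℝ) ∈ Ioc (0:ℝ) 1 by norm_num)] with z hz
      exact hz
    obtain ⟨x, hx1, hx2⟩ := (hev.and hev2).exists
    exact absurd (hf x hx2) (not_lt.2 (le_of_lt hx1))
  · intro hcond x hx
    obtain ⟨hx0, hx1⟩ := hx
    rcases eq_or_lt_of_le hu1 with hone | hlt
    · -- u = 1
      subst hone
      apply f_neg_of_h_neg hu0 (le_refl 1) hx0 hx1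
      intro z hz0 hzx
      have hz1 : z < 1 := lt_of_le_of_lt hzx hx1
      have hsum := hasSum_h (u := 1) (s := s) (by norm_num) (le_refl 1) hz0 hz1
      have hterm : ∀ k : ℕ, (1/(2*(k:ℝ)+3) - s*(1:ℝ)^(k+1)) * z^(2*k+3) ≤ 0 := by
        intro k
        have hz3 : (0:ℝ) ≤ z^(2*k+3) := by positivity
        have hk0 : (0:ℝ) ≤ (k:ℝ) := Nat.cast_nonneg k
        have hc : 1/(2*(k:ℝ)+3) - s*(1:ℝ)^(k+1) ≤ 0 := by
          have h1 : 1/(2*(k:ℝ)+3) ≤ 1/3 :=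
            div_le_div_of_nonneg_left (by norm_num) (by norm_num) (by linarith)
          simp only [one_pow, mul_one]
          linarith
        exact mul_nonpos_of_nonpos_of_nonneg hc hz3
      have hterm0 : (1/(2*((0:ℕ):ℝ)+3) - s*(1:ℝ)^(0+1)) * z^(2*0+3) < 0 := by
        have he : (1/(2*((0:ℕ):ℝ)+3) - s*(1:ℝ)^(0+1)) = 1/3 - s := by norm_num
        rw [he]
        exact mul_neg_of_neg_of_pos (by linarith) (by positivity)
      have hlt := hasSum_lt (f := fun k : ℕ => (1/(2*(k:ℝ)+3) - s*(1:ℝ)^(k+1)) * z^(2*k+3))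
        (g := fun _ : ℕ => (0:ℝ)) (i := 0) (fun k => hterm k) (by simpa using hterm0)
        hsum hasSum_zero
      simpa using hlt
    · -- u < 1
      have hE1 := E_lt_one hs
      have huE : 1 - (2 / Real.exp 1) ^ ((2:ℝ)/s) ≤ u := by linarith
      have hu0' : 0 < u := by linarith
      have h13 : 1/3 < s*u := su_third hs huE
      obtain ⟨M, hMneg, hMpos⟩ := exists_M hs hu0' hlt h13
      by_cases hcase : ∃ z, 0 < z ∧ z ≤ x ∧ 0 ≤ h u s z
      · obtain ⟨z, hz0, hzx, hznn⟩ := hcase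
        apply f_neg_of_h_pos hs hu0 hlt hx0 hx1 hcond
        intro w hw1 hw2
        have hw0 : 0 < w := lt_trans hx0 hw1
        have hzw : z < w := lt_of_le_of_lt hzx hw1
        have hmono := h_ratio_mono hu0 hu1 hMneg hMpos hz0 hzw hw2
        have hq : 0 ≤ h u s z / z^(2*M+5) := div_nonneg hznn (by positivity)
        have : 0 < h u s w / w^(2*M+5) := lt_of_le_of_lt hq hmono
        have hwpos : (0:ℝ) < w^(2*M+5) := by positivity
        by_contra hcon
        push_neg at hcon
        exact absurd this (not_lt.2 (div_nonpos_of_nonpos_of_nonneg hcon (le_of_lt hwpos)))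
      · push_neg at hcase
        exact f_neg_of_h_neg hu0 hu1 hx0 hx1 (fun z hz0 hzx => hcase z hz0 hzx)
end

section
/- Let a > b > 0, let s ≥ 1 be a real number, and let t ∈ [0, 1/2]. Then ln(Q_{t,s}(a,b) / I(a,b)) = f_{(1-2t)², s}((a-b)/(a+b)). -/
theorem stmt_8 (a b s t : ℝ) (hab : b < a) (hb : 0 < b) (hs : 1 ≤ s)
    (ht : t ∈ Set.Icc (0:ℝ) (1/2)) :
    Real.log (Q t s a b / I a b) = f ((1 - 2*t)^2) s ((a - b)/(a + b)) := by
  obtain ⟨ht0, ht1⟩ := ht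
  have ha : 0 < a := hb.trans hab
  have hab' : 0 < a + b := by linarith
  have hd : 0 < a - b := by linarith
  set x : ℝ := (a - b) / (a + b) with hx
  set c : ℝ := t * a + (1 - t) * b with hc
  set d : ℝ := t * b + (1 - t) * a with hdd
  have hcp : 0 < c := by nlinarith
  have hdp : 0 < d := by nlinarith
  have hcd : 0 < c * d := mul_pos hcp hdp
  have hApos : 0 < A a b := by unfold A; linarith
  have hGpos : 0 < G c d := Real.sqrt_pos.mpr hcd
  have hQpos : 0 < Q t s a b := by
    unfold Q
    exact mul_pos (Real.rpow_pos_of_pos hGpos s) (Real.rpow_pos_of_pos hApos (1 - s))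
  have hXpos : (0:ℝ) < a ^ a / b ^ b :=
    div_pos (Real.rpow_pos_of_pos ha a) (Real.rpow_pos_of_pos hb b)
  have hIpos : 0 < I a b := by
    unfold I
    exact mul_pos (by positivity) (Real.rpow_pos_of_pos hXpos _)
  -- log of Q
  have hlogG : Real.log (G c d) = Real.log (c * d) / 2 := by
    unfold G; exact Real.log_sqrt hcd.le
  have hlogA : Real.log (A a b) = Real.log (a + b) - Real.log 2 := by
    unfold A
    rw [Real.log_div (by positivity) (by norm_num)]
  have hlogQ : Real.log (Q t s a b)
      = s * (Real.log (c * d) / 2) + (1 - s) * (Real.log (a + b) - Real.log 2) := by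
    unfold Q
    rw [Real.log_mul (by positivity) (by positivity), Real.log_rpow hGpos,
      Real.log_rpow hApos, hlogG, hlogA]
  -- log of I
  have hlogI : Real.log (I a b)
      = -1 + (1 / (a - b)) * (a * Real.log a - b * Real.log b) := by
    unfold I
    rw [Real.log_mul (by positivity) (ne_of_gt (Real.rpow_pos_of_pos hXpos _)),
      one_div, Real.log_inv, Real.log_exp, Real.log_rpow hXpos,
      Real.log_div (ne_of_gt (Real.rpow_pos_of_pos ha a)) (ne_of_gt (Real.rpow_pos_of_pos hb b)),
      Real.log_rpow ha, Real.log_rpow hb]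
  rw [Real.log_div (ne_of_gt hQpos) (ne_of_gt hIpos), hlogQ, hlogI]
  -- rewrite f's arguments
  have e1 : (1 + x) / (1 - x) = a / b := by
    rw [hx]; field_simp; rw [div_eq_iff (ne_of_gt (by linarith))]; ring
  have e2 : 1 - x ^ 2 = (4 * (a * b)) / (a + b) ^ 2 := by
    rw [hx]; field_simp; ring
  have e3 : 1 - (1 - 2*t)^2 * x ^ 2 = (4 * (c * d)) / (a + b) ^ 2 := by
    rw [hx, hc, hdd]; field_simp; ring
  have e4 : 1 / (2 * x) = (a + b) / (2 * (a - b)) := by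
    rw [hx]; field_simp
  unfold f
  rw [e1, e2, e3, e4,
    Real.log_div (ne_of_gt ha) (ne_of_gt hb),
    Real.log_div (by positivity) (by positivity),
    Real.log_div (by positivity) (by positivity),
    Real.log_mul (by norm_num) (ne_of_gt (mul_pos ha hb)),
    Real.log_mul (by norm_num) (ne_of_gt hcd),
    Real.log_mul (ne_of_gt ha) (ne_of_gt hb),
    Real.log_pow, show (4:ℝ) = 2^2 by norm_num, Real.log_pow]
  push_cast
  field_simp
  ring
end

section
/- For every pair of distinct positive real numbers a and b, setting v = (a-b)/(a+b), one has exp(v²/6) ≤ A(a,b)/I(a,b) ≤ exp(ln(e/2)·v²). -/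
open Real Set

/-- derivative of (1+t)·log(1+t) -/
lemma hd_plus {x : ℝ} (hx : -1 < x) :
    HasDerivAt (fun t : ℝ => (1+t)*Real.log (1+t)) (Real.log (1+x) + 1) x := by
  have h0 : (0:ℝ) < 1 + x := by linarith
  have ha : HasDerivAt (fun t : ℝ => 1 + t) 1 x := (hasDerivAt_id x).const_add 1
  have hl : HasDerivAt (fun t : ℝ => Real.log (1+t)) (1 / (1+x)) x := ha.log h0.ne'
  have := ha.mul hl
  refine this.congr_deriv ?_
  field_simp

/-- derivative of (1−t)·log(1−t) -/
lemma hd_minus {x : ℝ} (hx : x < 1) :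
    HasDerivAt (fun t : ℝ => (1-t)*Real.log (1-t)) (-Real.log (1-x) - 1) x := by
  have h0 : (0:ℝ) < 1 - x := by linarith
  have ha : HasDerivAt (fun t : ℝ => 1 - t) (-1) x := (hasDerivAt_id x).const_sub 1
  have hl : HasDerivAt (fun t : ℝ => Real.log (1-t)) ((-1) / (1-x)) x := ha.log h0.ne'
  have := ha.mul hl
  refine this.congr_deriv ?_
  field_simp
  ring

lemma contN : Continuous (fun t : ℝ => (1+t)*Real.log (1+t) - (1-t)*Real.log (1-t)) := by
  have h1 : Continuous (fun t : ℝ => (1+t)*Real.log (1+t)) :=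
    Real.continuous_mul_log.comp (continuous_const.add continuous_id)
  have h2 : Continuous (fun t : ℝ => (1-t)*Real.log (1-t)) :=
    Real.continuous_mul_log.comp (continuous_const.sub continuous_id)
  exact h1.sub h2

/-- Inequality A: numerator ≤ 2t − t³/3 on (0,1). -/
lemma lemA {t : ℝ} (ht : t ∈ Set.Ioo (0:ℝ) 1) :
    (1+t)*Real.log (1+t) - (1-t)*Real.log (1-t) ≤ 2*t - t^3/3 := by
  obtain ⟨ht0, ht1⟩ := ht
  set φ : ℝ → ℝ := fun t => 2*t - t^3/3 - ((1+t)*Real.log (1+t) - (1-t)*Real.log (1-t))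
    with hφdef
  have hderiv : ∀ x ∈ Set.Ioo (0:ℝ) 1,
      HasDerivAt φ (-x^2 - (Real.log (1+x) + Real.log (1-x))) x := by
    intro x hx
    have h1 := hd_plus (by linarith [hx.1] : (-1:ℝ) < x)
    have h2 := hd_minus hx.2
    have hp : HasDerivAt (fun t : ℝ => 2*t - t^3/3) (2 - 3*x^2/3) x := by
      have := ((hasDerivAt_id x).const_mul 2).sub
        (((hasDerivAt_pow 3 x)).div_const 3)
      refine this.congr_deriv ?_
      · push_cast; ring
    have := hp.sub (h1.sub h2)
    refine this.congr_deriv ?_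
    ring
  have hmono : MonotoneOn φ (Set.Icc 0 t) := by
    apply monotoneOn_of_deriv_nonneg (convex_Icc 0 t)
    · exact (((continuous_const.mul continuous_id).sub
        ((continuous_pow 3).div_const 3)).sub contN).continuousOn
    · intro x hx
      rw [interior_Icc] at hx
      exact ((hderiv x ⟨hx.1, hx.2.trans ht1⟩).differentiableAt).differentiableWithinAt
    · intro x hx
      rw [interior_Icc] at hx
      have hx' : x ∈ Set.Ioo (0:ℝ) 1 := ⟨hx.1, hx.2.trans ht1⟩
      rw [(hderiv x hx').deriv]
      have hx1 : (0:ℝ) < 1 + x := by linarith [hx'.1]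
      have hx2 : (0:ℝ) < 1 - x := by linarith [hx'.2]
      rw [← Real.log_mul hx1.ne' hx2.ne']
      have := Real.log_le_sub_one_of_pos (by nlinarith : (0:ℝ) < (1+x)*(1-x))
      nlinarith
  have h0 : φ 0 = 0 := by simp [hφdef]
  have := hmono (Set.left_mem_Icc.2 ht0.le) (Set.right_mem_Icc.2 ht0.le) ht0.le
  rw [h0] at this
  simp only [hφdef] at this
  linarith

/-- s ↦ log(1−s)/s is antitone on (0,1). -/
lemma anti_log_div : AntitoneOn (fun s : ℝ => Real.log (1-s) / s) (Set.Ioo 0 1) := by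
  apply antitoneOn_of_deriv_nonpos (convex_Ioo 0 1)
  · intro s hs
    have h1 : (0:ℝ) < 1 - s := by linarith [hs.2]
    exact ((((hasDerivAt_id s).const_sub 1).log h1.ne').div (hasDerivAt_id s)
      (ne_of_gt hs.1)).continuousAt.continuousWithinAt
  · rw [interior_Ioo]
    intro s hs
    have h1 : (0:ℝ) < 1 - s := by linarith [hs.2]
    exact ((((hasDerivAt_id s).const_sub 1).log h1.ne').div (hasDerivAt_id s)
      (ne_of_gt hs.1)).differentiableAt.differentiableWithinAt
  · rw [interior_Ioo]
    intro s hs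
    have h1 : (0:ℝ) < 1 - s := by linarith [hs.2]
    have hs0 : (0:ℝ) < s := hs.1
    have hd : HasDerivAt (fun s : ℝ => Real.log (1-s) / s)
        (((-1)/(1-s) * s - Real.log (1-s) * 1) / s^2) s :=
      (((hasDerivAt_id s).const_sub 1).log h1.ne').div (hasDerivAt_id s) hs0.ne'
    rw [hd.deriv]
    apply div_nonpos_of_nonpos_of_nonneg _ (sq_nonneg s)
    -- need: -s/(1-s) - log(1-s) ≤ 0, i.e. -log(1-s) ≤ s/(1-s)
    have hlog : -Real.log (1-s) ≤ (1-s)⁻¹ - 1 := by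
      rw [← Real.log_inv]
      exact Real.log_le_sub_one_of_pos (inv_pos.2 h1)
    have hinv : (1-s)⁻¹ - 1 = s / (1-s) := by field_simp; ring
    rw [hinv] at hlog
    have he : (-1)/(1-s) * s - Real.log (1-s) * 1 = -(s/(1-s)) - Real.log (1-s) := by ring
    rw [he]
    linarith

/-- Inequality B: 2t − 2(1−log 2)t³ ≤ numerator on (0,1). -/
lemma lemB {t : ℝ} (ht : t ∈ Set.Ioo (0:ℝ) 1) :
    2*t - 2*(1-Real.log 2)*t^3 ≤ (1+t)*Real.log (1+t) - (1-t)*Real.log (1-t) := by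
  obtain ⟨ht0, ht1⟩ := ht
  set k : ℝ := 6*(1 - Real.log 2) with hk
  set ψ : ℝ → ℝ := fun t =>
    (1+t)*Real.log (1+t) - (1-t)*Real.log (1-t) - 2*t + (k/3)*t^3 with hψdef
  have hderiv : ∀ x ∈ Set.Ioo (-1:ℝ) 1,
      HasDerivAt ψ (Real.log (1-x^2) + k*x^2) x := by
    intro x hx
    have h1 := hd_plus hx.1
    have h2 := hd_minus hx.2
    have hp : HasDerivAt (fun t : ℝ => -(2*t) + (k/3)*t^3) (-2 + (k/3)*(3*x^2)) x := by
      have := (((hasDerivAt_id x).const_mul 2).neg).add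
        ((hasDerivAt_pow 3 x).const_mul (k/3))
      refine this.congr_deriv ?_
      push_cast; ring
    have hcomb := ((h1.sub h2).sub ((hasDerivAt_id x).const_mul 2)).add
      ((hasDerivAt_pow 3 x).const_mul (k/3))
    have heq : ψ = fun t => ((1+t)*Real.log (1+t) - (1-t)*Real.log (1-t)) - 2*t
        + (k/3)*t^3 := by ext t; simp [hψdef]
    rw [heq]
    have hx1 : (0:ℝ) < 1 + x := by linarith [hx.1]
    have hx2 : (0:ℝ) < 1 - x := by linarith [hx.2]
    have hlm : Real.log (1-x^2) = Real.log (1+x) + Real.log (1-x) := by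
      rw [show (1:ℝ)-x^2 = (1+x)*(1-x) by ring, Real.log_mul hx1.ne' hx2.ne']
    refine hcomb.congr_deriv ?_
    rw [hlm]; push_cast; ring
  have hcont : Continuous ψ := by
    exact (contN.sub (continuous_const.mul continuous_id)).add
      (continuous_const.mul (continuous_pow 3))
  have hψ0 : ψ 0 = 0 := by simp [hψdef]
  have hψ1 : ψ 1 = 0 := by
    simp only [hψdef, hk]
    rw [show (1:ℝ)-1 = 0 by ring, Real.log_zero]
    ring
  -- g = log(1-s)/s
  have hg : ∀ ⦃s₁ s₂ : ℝ⦄, s₁ ∈ Set.Ioo (0:ℝ) 1 → s₂ ∈ Set.Ioo (0:ℝ) 1 → s₁ ≤ s₂ →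
      Real.log (1-s₂)/s₂ ≤ Real.log (1-s₁)/s₁ := fun s₁ s₂ h1 h2 h12 =>
    anti_log_div h1 h2 h12
  have ht2 : t^2 ∈ Set.Ioo (0:ℝ) 1 := ⟨pow_pos ht0 2, by nlinarith⟩
  by_cases hw : 0 ≤ Real.log (1 - t^2) + k * t^2
  · -- ψ monotone on [0,t]
    have hmono : MonotoneOn ψ (Set.Icc 0 t) := by
      apply monotoneOn_of_deriv_nonneg (convex_Icc 0 t) hcont.continuousOn
      · intro x hx
        rw [interior_Icc] at hx
        exact (hderiv x ⟨by linarith [hx.1], by linarith [hx.2]⟩).differentiableAt.differentiableWithinAt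
      · intro x hx
        rw [interior_Icc] at hx
        have hx' : x ∈ Set.Ioo (-1:ℝ) 1 := ⟨by linarith [hx.1], by linarith [hx.2]⟩
        rw [(hderiv x hx').deriv]
        have hx2m : x^2 ∈ Set.Ioo (0:ℝ) 1 := ⟨pow_pos hx.1 2, by nlinarith [hx.1, hx.2, ht1]⟩
        have hle : x^2 ≤ t^2 := by nlinarith [hx.2, hx.1]
        have h1 := hg hx2m ht2 hle
        -- log(1-t²)/t² ≥ -k from hw
        have h2 : -k ≤ Real.log (1-t^2)/t^2 := by
          rw [le_div_iff₀ ht2.1]; linarith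
        have h3 : -k ≤ Real.log (1-x^2)/x^2 := le_trans h2 h1
        rw [le_div_iff₀ hx2m.1] at h3
        linarith
    have := hmono (Set.left_mem_Icc.2 ht0.le) (Set.right_mem_Icc.2 ht0.le) ht0.le
    rw [hψ0] at this
    simp only [hψdef, hk] at this
    nlinarith [this]
  · push_neg at hw
    have hanti : AntitoneOn ψ (Set.Icc t 1) := by
      apply antitoneOn_of_deriv_nonpos (convex_Icc t 1) hcont.continuousOn
      · intro x hx
        rw [interior_Icc] at hx
        exact (hderiv x ⟨by linarith [hx.1], hx.2⟩).differentiableAt.differentiableWithinAt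
      · intro x hx
        rw [interior_Icc] at hx
        have hx' : x ∈ Set.Ioo (-1:ℝ) 1 := ⟨by linarith [hx.1], hx.2⟩
        rw [(hderiv x hx').deriv]
        have hx0 : 0 < x := lt_trans ht0 hx.1
        have hx2m : x^2 ∈ Set.Ioo (0:ℝ) 1 := ⟨pow_pos hx0 2, by nlinarith [hx.2]⟩
        have hle : t^2 ≤ x^2 := by nlinarith [hx.1]
        have h1 := hg ht2 hx2m hle
        have h2 : Real.log (1-t^2)/t^2 < -k := by
          rw [div_lt_iff₀ ht2.1]; linarith
        have h3 : Real.log (1-x^2)/x^2 < -k := lt_of_le_of_lt h1 h2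
        rw [div_lt_iff₀ hx2m.1] at h3
        linarith
    have := hanti (Set.left_mem_Icc.2 ht1.le) (Set.right_mem_Icc.2 ht1.le) ht1.le
    rw [hψ1] at this
    simp only [hψdef, hk] at this
    nlinarith [this]

lemma lemF {t : ℝ} (ht : t ∈ Set.Ioo (0:ℝ) 1) :
    t^2/6 ≤ 1 - ((1+t)*Real.log (1+t) - (1-t)*Real.log (1-t))/(2*t) ∧
    1 - ((1+t)*Real.log (1+t) - (1-t)*Real.log (1-t))/(2*t) ≤ (1-Real.log 2)*t^2 := by
  have hA := lemA ht
  have hB := lemB ht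
  have h2t : (0:ℝ) < 2*t := by linarith [ht.1]
  constructor
  · have : ((1+t)*Real.log (1+t) - (1-t)*Real.log (1-t))/(2*t) ≤ 1 - t^2/6 := by
      rw [div_le_iff₀ h2t]; nlinarith
    linarith
  · have : 1 - (1-Real.log 2)*t^2 ≤ ((1+t)*Real.log (1+t) - (1-t)*Real.log (1-t))/(2*t) := by
      rw [le_div_iff₀ h2t]; nlinarith
    linarith

lemma key_id (A' v La L1 L2 : ℝ) (hA : A' ≠ 0) (hv : v ≠ 0) :
    ((A'*(1+v))*(La + L1) - (A'*(1-v))*(La + L2)) / (2*A'*v)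
      = La + ((1+v)*L1 - (1-v)*L2)/(2*v) := by
  field_simp
  ring


theorem stmt_11 (a b : ℝ) (ha : 0 < a) (hb : 0 < b) (hab : a ≠ b) (v : ℝ)
    (hv : v = (a - b) / (a + b)) :
    Real.exp (v^2 / 6) ≤ A a b / I a b ∧
      A a b / I a b ≤ Real.exp (Real.log (Real.exp 1 / 2) * v^2) := by
  have hs : (0:ℝ) < a + b := by linarith
  have hd : a - b ≠ 0 := sub_ne_zero.mpr hab
  have hv0 : v ≠ 0 := by rw [hv]; exact div_ne_zero hd hs.ne'
  have hvlt : -1 < v ∧ v < 1 := by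
    rw [hv]
    constructor
    · rw [lt_div_iff₀ hs]; linarith
    · rw [div_lt_one hs]; linarith
  have h1v : (0:ℝ) < 1 + v := by linarith [hvlt.1]
  have h2v : (0:ℝ) < 1 - v := by linarith [hvlt.2]
  have hApos : 0 < A a b := by unfold A; linarith
  have ha' : a = A a b * (1+v) := by rw [hv]; unfold A; field_simp; ring
  have hb' : b = A a b * (1-v) := by rw [hv]; unfold A; field_simp; ring
  have hab2 : a - b = 2 * A a b * v := by rw [hv]; unfold A; field_simp
  have hx : 0 < a ^ a / b ^ b := div_pos (Real.rpow_pos_of_pos ha a) (Real.rpow_pos_of_pos hb b)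
  have hIpos : 0 < I a b := by
    unfold I
    exact mul_pos (by positivity) (Real.rpow_pos_of_pos hx _)
  have hlogI : Real.log (I a b) = -1 + (a*Real.log a - b*Real.log b)/(a-b) := by
    unfold I
    rw [Real.log_mul (by positivity) (Real.rpow_pos_of_pos hx _).ne',
      Real.log_rpow hx,
      Real.log_div (Real.rpow_pos_of_pos ha a).ne' (Real.rpow_pos_of_pos hb b).ne',
      Real.log_rpow ha, Real.log_rpow hb, one_div (Real.exp 1), Real.log_inv, Real.log_exp]
    field_simp
  have e1 : a * Real.log a = (A a b * (1+v)) * (Real.log (A a b) + Real.log (1+v)) := by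
    rw [← Real.log_mul hApos.ne' h1v.ne', ← ha']
  have e2 : b * Real.log b = (A a b * (1-v)) * (Real.log (A a b) + Real.log (1-v)) := by
    rw [← Real.log_mul hApos.ne' h2v.ne', ← hb']
  have hkey : (a*Real.log a - b*Real.log b)/(a-b)
      = Real.log (A a b) + ((1+v)*Real.log (1+v) - (1-v)*Real.log (1-v))/(2*v) := by
    rw [e1, e2, hab2]
    exact key_id _ _ _ _ _ hApos.ne' hv0
  set F : ℝ := 1 - ((1+v)*Real.log (1+v) - (1-v)*Real.log (1-v))/(2*v) with hF
  have hAI : A a b / I a b = Real.exp F := by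
    rw [← Real.exp_log (div_pos hApos hIpos)]
    congr 1
    rw [Real.log_div hApos.ne' hIpos.ne', hlogI, hkey, hF]
    ring
  have hFb : v^2/6 ≤ F ∧ F ≤ (1-Real.log 2)*v^2 := by
    rcases lt_or_gt_of_ne hv0 with hneg | hpos
    · have ht : -v ∈ Set.Ioo (0:ℝ) 1 := ⟨by linarith, by linarith [hvlt.1]⟩
      have := lemF ht
      have heq : ((1+(-v))*Real.log (1+(-v)) - (1-(-v))*Real.log (1-(-v)))/(2*(-v))
          = ((1+v)*Real.log (1+v) - (1-v)*Real.log (1-v))/(2*v) := by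
        rw [show (1:ℝ)+(-v) = 1 - v by ring, show (1:ℝ)-(-v) = 1+v by ring,
          show ((1-v)*Real.log (1-v) - (1+v)*Real.log (1+v))
            = -((1+v)*Real.log (1+v) - (1-v)*Real.log (1-v)) by ring,
          show (2:ℝ)*(-v) = -(2*v) by ring, neg_div_neg_eq]
      rw [heq, show (-v)^2 = v^2 by ring] at this
      exact this
    · exact lemF ⟨hpos, hvlt.2⟩
  have hlog2 : Real.log (Real.exp 1 / 2) = 1 - Real.log 2 := by
    rw [Real.log_div (Real.exp_ne_zero 1) two_ne_zero, Real.log_exp]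
  rw [hAI, hlog2]
  exact ⟨Real.exp_le_exp.mpr hFb.1, Real.exp_le_exp.mpr (by linarith [hFb.2])⟩
end

section
/- Let p and q be positive real numbers. Then the double inequality exp(p·((a-b)/(a+b))²) < A(a,b)/I(a,b) < exp(q·((a-b)/(a+b))²) holds for every pair of positive real numbers a > b if and only if p ≤ 1/6 and q ≥ ln(e/2). -/
open Real Filter Topology Finset


noncomputable def Fc (x : ℝ) : ℝ :=
  1 - (1 / (2 * x)) * Real.log ((1 + x) / (1 - x)) - (1 / 2) * Real.log (1 - x ^ 2)

noncomputable def cc (n : ℕ) : ℝ := 1 / ((2 * n + 2) * (2 * n + 3))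

lemma cc_pos (n : ℕ) : 0 < cc n := by
  unfold cc; positivity

lemma summable_cc : Summable cc := by
  have h2 : Summable (fun n : ℕ => 1 / ((n : ℝ) + 1) ^ 2) := by
    have := (summable_one_div_nat_pow (p := 2)).2 (by norm_num)
    have := (summable_nat_add_iff (f := fun n : ℕ => 1 / (n : ℝ) ^ 2) 1).2 this
    simpa [one_div] using this
  refine Summable.of_nonneg_of_le (fun n => (cc_pos n).le) (fun n => ?_) h2
  unfold cc
  rw [div_le_div_iff₀ (by positivity) (by positivity)]
  nlinarith [sq_nonneg ((n : ℝ) + 1), Nat.cast_nonneg (α := ℝ) n]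

lemma hasSum_Fc {x : ℝ} (hx0 : 0 < x) (hx1 : x < 1) :
    HasSum (fun n : ℕ => cc n * x ^ (2 * n + 2)) (Fc x) := by
  have hax : |x| < 1 := by rw [abs_of_pos hx0]; exact hx1
  have hax2 : |x ^ 2| < 1 := by
    rw [abs_of_nonneg (sq_nonneg x)]; nlinarith
  have h1 := hasSum_log_sub_log_of_abs_lt_one hax
  have h1' := h1.mul_left (1 / (2 * x))
  have h2 := (hasSum_pow_div_log_of_abs_lt_one hax2).mul_left (1 / 2)
  have h1'' := (hasSum_nat_add_iff'
      (f := fun k : ℕ => 1 / (2 * x) * (2 * (1 / (2 * (k : ℝ) + 1)) * x ^ (2 * k + 1))) 1).2 h1'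
  have hsum := h2.sub h1''
  have hxne : x ≠ 0 := hx0.ne'
  have hsum0 : ∑ i ∈ range 1,
      (1 / (2 * x) * (2 * (1 / (2 * (i : ℝ) + 1)) * x ^ (2 * i + 1))) = 1 := by
    simp
    field_simp
  rw [hsum0] at hsum
  have hterm : (fun n : ℕ => 1 / 2 * ((x ^ 2) ^ (n + 1) / ((n : ℝ) + 1))
      - 1 / (2 * x) * (2 * (1 / (2 * ((n + 1 : ℕ) : ℝ) + 1)) * x ^ (2 * (n + 1) + 1)))
      = fun n : ℕ => cc n * x ^ (2 * n + 2) := by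
    funext n
    push_cast
    have hpow1 : (x ^ 2) ^ (n + 1) = x ^ (2 * n + 2) := by
      rw [← pow_mul]; ring_nf
    have hpow2 : x ^ (2 * (n + 1) + 1) = x ^ (2 * n + 2) * x := by
      rw [← pow_succ]; ring_nf
    rw [hpow1, hpow2]
    unfold cc
    have c1 : ((n : ℝ) + 1) ≠ 0 := by positivity
    have c2 : (2 * ((n : ℝ) + 1) + 1) ≠ 0 := by positivity
    have c3 : ((2 : ℝ) * n + 2) * (2 * n + 3) ≠ 0 := by positivity
    field_simp
    ring
  have hval : Fc x = 1 / 2 * (-Real.log (1 - x ^ 2)) -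
      (1 / (2 * x) * (Real.log (1 + x) - Real.log (1 - x)) - 1) := by
    unfold Fc
    rw [Real.log_div (by linarith : (1 : ℝ) + x ≠ 0) (by linarith : (1 : ℝ) - x ≠ 0)]
    ring
  rw [hval]
  have final := hsum
  rw [hterm] at final
  exact final

lemma neg_mul_log_le {t : ℝ} (ht : 0 < t) : -(t * Real.log t) ≤ 2 * Real.sqrt t := by
  have hs : 0 < Real.sqrt t := Real.sqrt_pos.2 ht
  have h1 := Real.log_le_sub_one_of_pos (inv_pos.2 hs)
  rw [Real.log_inv, Real.log_sqrt ht.le] at h1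
  have h2 : -Real.log t ≤ 2 / Real.sqrt t := by
    rw [div_eq_mul_inv]; linarith
  calc -(t * Real.log t) = t * (-Real.log t) := by ring
    _ ≤ t * (2 / Real.sqrt t) := by
        exact mul_le_mul_of_nonneg_left h2 ht.le
    _ = 2 * (t / Real.sqrt t) := by ring
    _ = 2 * Real.sqrt t := by rw [Real.div_sqrt]

lemma Fc_expand {x : ℝ} (hx0 : 0 < x) (hx1 : x < 1) :
    Fc x = 1 - (1 / (2 * x)) * (Real.log (1 + x) - Real.log (1 - x))
      - (1 / 2) * (Real.log (1 - x) + Real.log (1 + x)) := by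
  unfold Fc
  rw [Real.log_div (by linarith : (1 : ℝ) + x ≠ 0) (by linarith : (1 : ℝ) - x ≠ 0),
    show (1 : ℝ) - x ^ 2 = (1 - x) * (1 + x) by ring,
    Real.log_mul (by linarith : (1 : ℝ) - x ≠ 0) (by linarith : (1 : ℝ) + x ≠ 0)]

lemma Fc_lower {x : ℝ} (hx0 : 1/2 ≤ x) (hx1 : x < 1) :
    1 - Real.log 2 - 3 * Real.sqrt (1 - x) ≤ Fc x := by
  have hx0' : 0 < x := by linarith
  rw [Fc_expand hx0' hx1]
  set s := Real.sqrt (1 - x) with hs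
  set Lp := Real.log (1 + x) with hLp
  set Lm := Real.log (1 - x) with hLm
  have hs0 : 0 ≤ s := Real.sqrt_nonneg _
  have hs2 : s ^ 2 = 1 - x := Real.sq_sqrt (by linarith)
  have hs1 : s ≤ 1 := Real.sqrt_le_one.2 (by linarith)
  have h1 : -((1 - x) * Lm) ≤ 2 * s := neg_mul_log_le (by linarith)
  have h2 : Lp ≤ Real.log 2 := by
    rw [hLp]; exact Real.log_le_log (by linarith) (by linarith)
  have h3 : 0 ≤ Lp := Real.log_nonneg (by linarith)
  have h4 : Real.log 2 ≤ 1 := by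
    have := Real.log_le_sub_one_of_pos (by norm_num : (0:ℝ) < 2); linarith
  have h5 : 0 ≤ Real.log 2 := Real.log_nonneg (by norm_num)
  have h6 : Lm ≤ 0 := Real.log_nonpos (by linarith) (by linarith)
  -- reduce to multiplied-out form
  rw [← sub_nonneg]
  have key : 0 ≤ 2 * x * (1 - (1 / (2 * x)) * (Lp - Lm) - (1 / 2) * (Lm + Lp)
      - (1 - Real.log 2 - 3 * s)) := by
    have hexp : 2 * x * (1 - (1 / (2 * x)) * (Lp - Lm) - (1 / 2) * (Lm + Lp)
        - (1 - Real.log 2 - 3 * s))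
        = 2 * x - (Lp - Lm) - x * (Lm + Lp) - 2 * x * (1 - Real.log 2 - 3 * s) := by
      field_simp
    rw [hexp]
    nlinarith [h1, h2, h3, h4, h5, h6, hs2, hs1, hs0, hx0, hx1,
      mul_le_mul_of_nonneg_left h2 (by linarith : (0:ℝ) ≤ 1 + x),
      mul_nonneg hs0 (by linarith : (0:ℝ) ≤ 1 - x)]
  nlinarith [key, hx0']

lemma Fc_upper {x : ℝ} (hx0 : 0 < x) (hx1 : x < 1) :
    Fc x ≤ 1 - Real.log (1 + x) := by
  rw [Fc_expand hx0 hx1]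
  set Lp := Real.log (1 + x) with hLp
  set Lm := Real.log (1 - x) with hLm
  have h3 : 0 ≤ Lp := Real.log_nonneg (by linarith)
  have h6 : Lm ≤ 0 := Real.log_nonpos (by linarith) (by linarith)
  have hD : 0 ≤ Lp - Lm := by linarith
  have hco : (1:ℝ) / 2 ≤ 1 / (2 * x) := by
    rw [div_le_div_iff₀ (by norm_num) (by linarith)]; linarith
  have := mul_le_mul_of_nonneg_right hco hD
  linarith


lemma Fc_le_tsum {x : ℝ} (hx0 : 0 < x) (hx1 : x < 1) : Fc x ≤ ∑' n, cc n := by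
  refine hasSum_le (fun n => ?_) (hasSum_Fc hx0 hx1) summable_cc.hasSum
  have : x ^ (2 * n + 2) ≤ 1 := pow_le_one₀ hx0.le hx1.le
  nlinarith [cc_pos n]

lemma partial_le (N : ℕ) : ∑ n ∈ range N, cc n ≤ 1 - Real.log 2 := by
  have key : ∀ x ∈ Set.Ioo (0:ℝ) 1,
      (∑ n ∈ range N, cc n) * x ^ (2 * N) ≤ 1 - Real.log (1 + x) := by
    rintro x ⟨hx0, hx1⟩
    have h1 : (∑ n ∈ range N, cc n) * x ^ (2 * N)
        = ∑ n ∈ range N, cc n * x ^ (2 * N) := by rw [Finset.sum_mul]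
    have h2 : ∑ n ∈ range N, cc n * x ^ (2 * N) ≤ ∑ n ∈ range N, cc n * x ^ (2 * n + 2) := by
      refine Finset.sum_le_sum fun n hn => ?_
      have hle : 2 * n + 2 ≤ 2 * N := by
        have := Finset.mem_range.1 hn; omega
      exact mul_le_mul_of_nonneg_left (pow_le_pow_of_le_one hx0.le hx1.le hle) (cc_pos n).le
    have h3 : ∑ n ∈ range N, cc n * x ^ (2 * n + 2) ≤ Fc x := by
      refine sum_le_hasSum _ (fun n _ => ?_) (hasSum_Fc hx0 hx1)
      exact mul_nonneg (cc_pos n).le (by positivity)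
    have h4 := Fc_upper hx0 hx1
    linarith
  have t1 : Tendsto (fun x : ℝ => (∑ n ∈ range N, cc n) * x ^ (2 * N)) (𝓝[<] (1:ℝ))
      (𝓝 (∑ n ∈ range N, cc n)) := by
    have : Tendsto (fun x : ℝ => (∑ n ∈ range N, cc n) * x ^ (2 * N)) (𝓝 (1:ℝ))
        (𝓝 ((∑ n ∈ range N, cc n) * 1 ^ (2 * N))) :=
      (continuous_const.mul (continuous_pow _)).tendsto 1
    norm_num at this
    exact this.mono_left nhdsWithin_le_nhds
  have t2 : Tendsto (fun x : ℝ => 1 - Real.log (1 + x)) (𝓝[<] (1:ℝ))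
      (𝓝 (1 - Real.log 2)) := by
    have hc : ContinuousAt (fun x : ℝ => 1 - Real.log (1 + x)) 1 := by
      have h2 : ContinuousAt (fun x : ℝ => 1 + x) 1 := by fun_prop
      have := (Real.continuousAt_log (by norm_num : (1:ℝ) + 1 ≠ 0)).comp h2
      exact continuousAt_const.sub this
    have := hc.tendsto.mono_left (nhdsWithin_le_nhds (s := Set.Iio (1:ℝ)))
    norm_num at this
    exact this
  refine le_of_tendsto_of_tendsto t1 t2 ?_
  filter_upwards [Ioo_mem_nhdsLT_of_mem (a := (0:ℝ)) (b := 1) (c := 1) ⟨by norm_num, le_rfl⟩] with x hx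
  exact key x hx

lemma tsum_cc_le : ∑' n, cc n ≤ 1 - Real.log 2 :=
  le_of_tendsto summable_cc.hasSum.tendsto_sum_nat (Eventually.of_forall partial_le)

lemma tsum_cc_ge : 1 - Real.log 2 ≤ ∑' n, cc n := by
  by_contra hcon
  push_neg at hcon
  set L := ∑' n, cc n with hL
  set d := 1 - Real.log 2 - L with hd
  have hd0 : 0 < d := by simp [hd]; linarith
  set e := min ((d / 4) ^ 2) (1 / 4 : ℝ) with he
  have he0 : 0 < e := lt_min (by positivity) (by norm_num)
  set x := 1 - e with hx
  have hx1 : x < 1 := by simp [hx]; linarith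
  have hxh : 1/2 ≤ x := by
    have : e ≤ 1/4 := min_le_right _ _
    simp only [hx]; linarith
  have hsq : Real.sqrt (1 - x) ≤ d / 4 := by
    have h1 : (1 : ℝ) - x = e := by simp [hx]
    rw [h1]
    calc Real.sqrt e ≤ Real.sqrt ((d/4)^2) := Real.sqrt_le_sqrt (min_le_left _ _)
      _ = d / 4 := Real.sqrt_sq (by positivity)
  have hlow := Fc_lower hxh hx1
  have hup := Fc_le_tsum (by linarith : (0:ℝ) < x) hx1
  rw [← hL] at hup
  nlinarith [hlow, hup, hsq, hd0]

lemma hasSum_cc : HasSum cc (1 - Real.log 2) := by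
  have h := summable_cc.hasSum
  rwa [le_antisymm tsum_cc_le tsum_cc_ge] at h


lemma Fc_gt {x : ℝ} (hx0 : 0 < x) (hx1 : x < 1) : x ^ 2 / 6 < Fc x := by
  refine hasSum_lt (f := fun n : ℕ => if n = 0 then x ^ 2 / 6 else 0) (i := 1)
    (fun n => ?_) ?_ (hasSum_ite_eq 0 _) (hasSum_Fc hx0 hx1)
  · by_cases hn : n = 0
    · subst hn
      simp only [if_pos rfl]
      norm_num [cc]
      linarith
    · simp only [if_neg hn]
      exact mul_nonneg (cc_pos n).le (by positivity)
  · simp only [if_neg one_ne_zero]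
    exact mul_pos (cc_pos 1) (by positivity)

lemma Fc_lt {x : ℝ} (hx0 : 0 < x) (hx1 : x < 1) : Fc x < (1 - Real.log 2) * x ^ 2 := by
  refine hasSum_lt (g := fun n : ℕ => cc n * x ^ 2) (i := 1)
    (fun n => ?_) ?_ (hasSum_Fc hx0 hx1) (hasSum_cc.mul_right (x ^ 2))
  · exact mul_le_mul_of_nonneg_left
      (pow_le_pow_of_le_one hx0.le hx1.le (by omega)) (cc_pos n).le
  · have : x ^ (2 * 1 + 2) < x ^ 2 :=
      pow_lt_pow_right_of_lt_one₀ hx0 hx1 (by norm_num)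
    exact mul_lt_mul_of_pos_left this (cc_pos 1)

lemma Fc_upper_small {x : ℝ} (hx0 : 0 < x) (hx1 : x < 1) :
    Fc x ≤ x ^ 2 / 6 + x ^ 4 := by
  have h1 := (hasSum_nat_add_iff' (f := fun n : ℕ => cc n * x ^ (2 * n + 2)) 1).2
    (hasSum_Fc hx0 hx1)
  have h2 := ((hasSum_nat_add_iff' (f := cc) 1).2 hasSum_cc).mul_right (x ^ 4)
  have hle := hasSum_le (fun n => ?_) h1 h2
  · have e1 : ∑ i ∈ range 1, cc i * x ^ (2 * i + 2) = x ^ 2 / 6 := by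
      norm_num [cc]
      ring
    have e2 : ∑ i ∈ range 1, cc i = 1 / 6 := by norm_num [cc]
    rw [e1] at hle
    rw [e2] at hle
    have hl2 : 0 ≤ Real.log 2 := Real.log_nonneg (by norm_num)
    nlinarith [pow_nonneg hx0.le 4]
  · exact mul_le_mul_of_nonneg_left
      (pow_le_pow_of_le_one hx0.le hx1.le (by omega)) (cc_pos _).le

lemma AdivI (a b : ℝ) (hb : 0 < b) (hab : b < a) :
    A a b / I a b = Real.exp (Fc ((a - b) / (a + b))) := by
  have ha : 0 < a := hb.trans hab
  have hs : 0 < a + b := by linarith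
  have hd : 0 < a - b := by linarith
  have hIa : I a b = Real.exp ((a * Real.log a - b * Real.log b) / (a - b) - 1) := by
    unfold I
    rw [Real.rpow_def_of_pos ha, Real.rpow_def_of_pos hb, ← Real.exp_sub,
      Real.rpow_def_of_pos (Real.exp_pos _), Real.log_exp, one_div (Real.exp 1),
      ← Real.exp_neg, ← Real.exp_add]
    congr 1
    field_simp
    ring
  have hA : A a b = Real.exp (Real.log (a + b) - Real.log 2) := by
    unfold A
    rw [← Real.log_div hs.ne' (by norm_num), Real.exp_log (by positivity)]
  rw [hIa, hA, ← Real.exp_sub]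
  congr 1
  have h1x : (1 : ℝ) + (a - b) / (a + b) = 2 * a / (a + b) := by field_simp; ring
  have h2x : (1 : ℝ) - (a - b) / (a + b) = 2 * b / (a + b) := by field_simp; ring
  have h3 : ((1 : ℝ) + (a - b) / (a + b)) / (1 - (a - b) / (a + b)) = a / b := by
    rw [h1x, h2x]
    rw [div_div_div_cancel_right₀]
    · rw [mul_comm 2 a, mul_comm 2 b, mul_div_mul_right _ _ (by norm_num : (2:ℝ) ≠ 0)]
    · exact hs.ne'
  have h4 : (1 : ℝ) - ((a - b) / (a + b)) ^ 2 = 4 * a * b / (a + b) ^ 2 := by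
    field_simp
    ring
  have h5 : 1 / (2 * ((a - b) / (a + b))) = (a + b) / (2 * (a - b)) := by
    rw [div_eq_div_iff (by positivity) (by positivity)]
    field_simp
  unfold Fc
  rw [h3, h4, h5, Real.log_div ha.ne' hb.ne',
    Real.log_div (by positivity : (4 : ℝ) * a * b ≠ 0) (by positivity : ((a + b) ^ 2 : ℝ) ≠ 0),
    Real.log_mul (by positivity : (4 : ℝ) * a ≠ 0) hb.ne',
    Real.log_mul (by norm_num : (4 : ℝ) ≠ 0) ha.ne', Real.log_pow,
    show (4 : ℝ) = 2 ^ 2 by norm_num, Real.log_pow]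
  field_simp
  ring

theorem stmt_12 (p q : ℝ) (hp : 0 < p) (hq : 0 < q) :
    (∀ a b : ℝ, 0 < b → b < a →
        Real.exp (p * ((a - b)/(a + b))^2) < A a b / I a b ∧
          A a b / I a b < Real.exp (q * ((a - b)/(a + b))^2)) ↔
      p ≤ 1/6 ∧ Real.log (Real.exp 1 / 2) ≤ q := by
  have hlog2 : Real.log (Real.exp 1 / 2) = 1 - Real.log 2 := by
    rw [Real.log_div (Real.exp_ne_zero 1) (by norm_num), Real.log_exp]
  rw [hlog2]
  constructor
  · intro Hyp
    constructor
    · by_contra hcon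
      push_neg at hcon
      set x := min (Real.sqrt (p - 1/6)) (1/2) with hxdef
      have hx0 : 0 < x := lt_min (Real.sqrt_pos.2 (by linarith)) (by norm_num)
      have hx1 : x < 1 := lt_of_le_of_lt (min_le_right _ _) (by norm_num)
      have hxsq : x ^ 2 ≤ p - 1/6 := by
        have h1 : x ≤ Real.sqrt (p - 1/6) := min_le_left _ _
        calc x ^ 2 ≤ Real.sqrt (p - 1/6) ^ 2 := by nlinarith [Real.sqrt_nonneg (p - 1/6)]
          _ = p - 1/6 := Real.sq_sqrt (by linarith)
      have hx' : ((1 + x) - (1 - x)) / ((1 + x) + (1 - x)) = x := by ring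
      have H2 := (Hyp (1 + x) (1 - x) (by linarith) (by linarith)).1
      rw [AdivI _ _ (by linarith) (by linarith), hx', Real.exp_lt_exp] at H2
      have hupp := Fc_upper_small hx0 hx1
      nlinarith [pow_pos hx0 2, mul_le_mul_of_nonneg_left hxsq (sq_nonneg x)]
    · by_contra hcon
      push_neg at hcon
      set d := 1 - Real.log 2 - q with hd
      have hd0 : 0 < d := by simp only [hd]; linarith
      set e := min ((d/4)^2) (1/4 : ℝ) with he
      have he0 : 0 < e := lt_min (by positivity) (by norm_num)
      set x := 1 - e with hx
      have hx1 : x < 1 := by simp only [hx]; linarith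
      have hxh : 1/2 ≤ x := by
        have : e ≤ 1/4 := min_le_right _ _
        simp only [hx]; linarith
      have hx0 : 0 < x := by linarith
      have hsq : Real.sqrt (1 - x) ≤ d/4 := by
        have h1 : (1 : ℝ) - x = e := by simp [hx]
        rw [h1]
        calc Real.sqrt e ≤ Real.sqrt ((d/4)^2) := Real.sqrt_le_sqrt (min_le_left _ _)
          _ = d/4 := Real.sqrt_sq (by positivity)
      have hx' : ((1 + x) - (1 - x)) / ((1 + x) + (1 - x)) = x := by ring
      have H2 := (Hyp (1 + x) (1 - x) (by linarith) (by linarith)).2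
      rw [AdivI _ _ (by linarith) (by linarith), hx', Real.exp_lt_exp] at H2
      have hlow := Fc_lower hxh hx1
      have hxs : x ^ 2 ≤ 1 := by nlinarith
      nlinarith [hlow, H2, hsq, hq, hd0, hxs, Real.sqrt_nonneg (1 - x)]
  · rintro ⟨hp', hq'⟩ a b hb hab
    have hs : 0 < a + b := by linarith
    have hd : 0 < a - b := by linarith
    set x := (a - b) / (a + b) with hx
    have hx0 : 0 < x := div_pos hd hs
    have hx1 : x < 1 := (div_lt_one hs).2 (by linarith)
    rw [AdivI a b hb hab]
    constructor
    · rw [Real.exp_lt_exp]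
      have := Fc_gt hx0 hx1
      nlinarith [sq_nonneg x]
    · rw [Real.exp_lt_exp]
      have := Fc_lt hx0 hx1
      nlinarith [sq_nonneg x]
end

section
/- Let s ≥ 1 and u ∈ [0,1] with 3·s·u ≤ 1. Then the function h_{u,s} is positive on (0,1), and consequently f_{u,s} is strictly increasing on (0,1). -/
/-- The "artanh" function written with a difference of logs. -/
noncomputable def Lf (x : ℝ) : ℝ := (1/2) * (Real.log (1+x) - Real.log (1-x))

noncomputable def Pf (x : ℝ) : ℝ := x / (1 - x^2) - Lf x

noncomputable def Gf (x : ℝ) : ℝ := (Lf x - x) * (3 - x^2) - x^3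

lemma hasDerivAt_Lf {x : ℝ} (h1 : -1 < x) (h2 : x < 1) :
    HasDerivAt Lf (1/(1-x^2)) x := by
  have hx1 : (0:ℝ) < 1 + x := by linarith
  have hx2 : (0:ℝ) < 1 - x := by linarith
  have hne : (1:ℝ) - x^2 ≠ 0 := by nlinarith
  have d1 : HasDerivAt (fun y : ℝ => Real.log (1+y)) (1/(1+x)) x := by
    have := ((hasDerivAt_id x).const_add 1).log hx1.ne'
    simpa using this
  have d2 : HasDerivAt (fun y : ℝ => Real.log (1-y)) (-1/(1-x)) x := by
    have := ((hasDerivAt_id x).const_sub 1).log hx2.ne'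
    simpa using this
  have := (d1.sub d2).const_mul (1/2 : ℝ)
  refine this.congr_deriv ?_
  field_simp
  ring

lemma hasDerivAt_Pf {x : ℝ} (h1 : -1 < x) (h2 : x < 1) :
    HasDerivAt Pf (2*x^2/(1-x^2)^2) x := by
  have hne : (1:ℝ) - x^2 ≠ 0 := by nlinarith
  have d0 : HasDerivAt (fun y : ℝ => 1 - y^2) (-(2*x)) x := by
    have := (hasDerivAt_pow 2 x).const_sub 1
    simpa using this
  have d1 : HasDerivAt (fun y : ℝ => y / (1 - y^2))
      ((1 * (1 - x^2) - x * (-(2*x))) / (1 - x^2)^2) x :=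
    (hasDerivAt_id x).div d0 hne
  have := d1.sub (hasDerivAt_Lf h1 h2)
  refine this.congr_deriv ?_
  field_simp
  ring

lemma hasDerivAt_Gf {x : ℝ} (h1 : -1 < x) (h2 : x < 1) :
    HasDerivAt Gf (2*x*(Pf x)) x := by
  have hne : (1:ℝ) - x^2 ≠ 0 := by nlinarith
  have d0 : HasDerivAt (fun y : ℝ => 3 - y^2) (-(2*x)) x := by
    have := (hasDerivAt_pow 2 x).const_sub 3
    simpa using this
  have dL : HasDerivAt (fun y : ℝ => Lf y - y) (1/(1-x^2) - 1) x :=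
    (hasDerivAt_Lf h1 h2).sub (hasDerivAt_id x)
  have := ((dL.mul d0).sub (hasDerivAt_pow 3 x))
  refine this.congr_deriv ?_
  simp only [Pf, Lf]
  field_simp
  ring

lemma Pf_pos {x : ℝ} (h1 : 0 < x) (h2 : x < 1) : 0 < Pf x := by
  have hmono : StrictMonoOn Pf (Set.Ico 0 1) := by
    apply strictMonoOn_of_deriv_pos (convex_Ico 0 1)
    · intro y hy
      exact (hasDerivAt_Pf (by linarith [hy.1] : (-1:ℝ) < y) hy.2).continuousAt.continuousWithinAt
    · intro y hy
      rw [interior_Ico] at hy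
      rw [(hasDerivAt_Pf (by linarith [hy.1] : (-1:ℝ) < y) hy.2).deriv]
      have h1y : (0:ℝ) < 1 - y^2 := by nlinarith [hy.1, hy.2]
      exact div_pos (mul_pos two_pos (pow_pos hy.1 2)) (pow_pos h1y 2)
  have h0 : Pf 0 = 0 := by simp [Pf, Lf]
  have := hmono (Set.mem_Ico.mpr ⟨le_refl 0, one_pos⟩) (Set.mem_Ico.mpr ⟨h1.le, h2⟩) h1
  rwa [h0] at this

lemma Gf_pos {x : ℝ} (h1 : 0 < x) (h2 : x < 1) : 0 < Gf x := by
  have hmono : StrictMonoOn Gf (Set.Ico 0 1) := by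
    apply strictMonoOn_of_deriv_pos (convex_Ico 0 1)
    · intro y hy
      exact (hasDerivAt_Gf (by linarith [hy.1] : (-1:ℝ) < y) hy.2).continuousAt.continuousWithinAt
    · intro y hy
      rw [interior_Ico] at hy
      rw [(hasDerivAt_Gf (by linarith [hy.1] : (-1:ℝ) < y) hy.2).deriv]
      exact mul_pos (by linarith [hy.1]) (Pf_pos hy.1 hy.2)
  have h0 : Gf 0 = 0 := by simp [Gf, Lf]
  have := hmono (Set.mem_Ico.mpr ⟨le_refl 0, one_pos⟩) (Set.mem_Ico.mpr ⟨h1.le, h2⟩) h1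
  rwa [h0] at this

theorem stmt_15 (s u : ℝ) (hs : 1 ≤ s) (hu : u ∈ Set.Icc (0:ℝ) 1)
    (h3su : 3 * s * u ≤ 1) :
    (∀ x ∈ Set.Ioo (0:ℝ) 1, 0 < h u s x) ∧ StrictMonoOn (f u s) (Set.Ioo (0:ℝ) 1) := by
  obtain ⟨hu0, hu1⟩ := hu
  have hu3 : u ≤ 1/3 := by nlinarith
  -- positivity of h
  have hpos : ∀ x ∈ Set.Ioo (0:ℝ) 1, 0 < h u s x := by
    intro x hx
    obtain ⟨hx0, hx1⟩ := hx
    have hx1p : (0:ℝ) < 1 + x := by linarith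
    have hx2p : (0:ℝ) < 1 - x := by linarith
    have h3x : (0:ℝ) < 3 - x^2 := by nlinarith
    have hux : (0:ℝ) < 1 - u * x^2 := by nlinarith
    have hlog : Real.log ((1+x)/(1-x)) = Real.log (1+x) - Real.log (1-x) :=
      Real.log_div hx1p.ne' hx2p.ne'
    have hG := Gf_pos hx0 hx1
    have hkey : x^3 / (3 - x^2) < Lf x - x := by
      rw [div_lt_iff₀ h3x]
      simp only [Gf] at hG
      linarith
    have hbound : s * u * x^3 / (1 - u * x^2) ≤ x^3 / (3 - x^2) := by
      rw [div_le_div_iff₀ hux h3x]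
      have h1 : 3 * (s*u) * x^3 ≤ x^3 := by
        have := mul_le_mul_of_nonneg_right h3su (pow_pos hx0 3).le
        linarith
      have h2 : u * x^5 ≤ s * u * x^5 := by
        have := mul_nonneg (mul_nonneg (by linarith : (0:ℝ) ≤ s - 1) hu0) (pow_pos hx0 5).le
        nlinarith
      nlinarith
    have : h u s x = (Lf x - x) - s * u * x^3 / (1 - u * x^2) := by
      simp only [h, Lf, hlog]; ring
    rw [this]
    linarith
  refine ⟨hpos, ?_⟩
  -- derivative of f
  have hderiv : ∀ x ∈ Set.Ioo (0:ℝ) 1, HasDerivAt (f u s) (h u s x / x^2) x := by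
    intro x hx
    obtain ⟨hx0, hx1⟩ := hx
    have hx1p : (0:ℝ) < 1 + x := by linarith
    have hx2p : (0:ℝ) < 1 - x := by linarith
    have hxsq : (0:ℝ) < 1 - x^2 := by nlinarith
    have hux : (0:ℝ) < 1 - u * x^2 := by nlinarith
    have hxne : x ≠ 0 := hx0.ne'
    -- log ((1+x)/(1-x))
    have dq : HasDerivAt (fun y : ℝ => (1+y)/(1-y))
        ((1 * (1 - x) - (1+x) * (-1)) / (1-x)^2) x := by
      have dnum : HasDerivAt (fun y : ℝ => 1 + y) 1 x := by
        simpa using (hasDerivAt_id x).const_add 1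
      have dden : HasDerivAt (fun y : ℝ => 1 - y) (-1) x := by
        simpa using (hasDerivAt_id x).const_sub 1
      exact dnum.div dden hx2p.ne'
    have hqpos : (0:ℝ) < (1+x)/(1-x) := div_pos hx1p hx2p
    have dlog1 : HasDerivAt (fun y : ℝ => Real.log ((1+y)/(1-y)))
        (((1 * (1 - x) - (1+x) * (-1)) / (1-x)^2) / ((1+x)/(1-x))) x :=
      dq.log hqpos.ne'
    -- 1/(2y)
    have dinv : HasDerivAt (fun y : ℝ => 1/(2*y))
        ((0 * (2*x) - 1 * 2) / (2*x)^2) x := by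
      have d2y : HasDerivAt (fun y : ℝ => 2*y) 2 x := by
        simpa using (hasDerivAt_id x).const_mul 2
      exact (hasDerivAt_const x (1:ℝ)).div d2y (by positivity)
    have dterm1 := dinv.mul dlog1
    -- log(1 - y^2)
    have dsq : HasDerivAt (fun y : ℝ => 1 - y^2) (-(2*x)) x := by
      simpa using (hasDerivAt_pow 2 x).const_sub 1
    have dlog2 : HasDerivAt (fun y : ℝ => Real.log (1 - y^2)) (-(2*x) / (1-x^2)) x :=
      dsq.log hxsq.ne'
    -- log(1 - u y^2)
    have dusq : HasDerivAt (fun y : ℝ => 1 - u * y^2) (-(u * (2*x))) x := by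
      have := ((hasDerivAt_pow 2 x).const_mul u).const_sub 1
      simpa [mul_comm] using this
    have dlog3 : HasDerivAt (fun y : ℝ => Real.log (1 - u * y^2))
        (-(u * (2*x)) / (1 - u * x^2)) x := dusq.log hux.ne'
    have Dall := (((hasDerivAt_const x (1:ℝ)).sub dterm1).sub
        (dlog2.const_mul (1/2 : ℝ))).add (dlog3.const_mul (s/2 : ℝ))
    have hfeq : f u s = fun y : ℝ =>
        1 - (1 / (2 * y)) * Real.log ((1 + y) / (1 - y))
          - (1 / 2) * Real.log (1 - y ^ 2) + (s / 2) * Real.log (1 - u * y ^ 2) := rfl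
    rw [hfeq]
    refine Dall.congr_deriv ?_
    have hlog : Real.log ((1+x)/(1-x)) = Real.log (1+x) - Real.log (1-x) :=
      Real.log_div hx1p.ne' hx2p.ne'
    simp only [h, hlog]
    field_simp
    ring
  apply strictMonoOn_of_deriv_pos (convex_Ioo 0 1)
  · intro x hx
    exact (hderiv x hx).continuousAt.continuousWithinAt
  · intro x hx
    rw [interior_Ioo] at hx
    rw [(hderiv x hx).deriv]
    exact div_pos (hpos x hx) (by nlinarith [hx.1] : (0:ℝ) < x^2)
end

section
/- Let s ≥ 1 and u ∈ [0,1]. Then f_{u,s}(x) tends to 0 as x tends to 0 from the right; moreover, if u < 1, then f_{u,s}(x) tends to ln(e·(1-u)^(s/2)/2) as x tends to 1 from the left. -/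
open Real Filter Set Topology

theorem stmt_16 (s u : ℝ) (hs : 1 ≤ s) (hu : u ∈ Set.Icc (0:ℝ) 1) :
    Filter.Tendsto (f u s) (nhdsWithin 0 (Set.Ioi 0)) (nhds 0) ∧
      (u < 1 →
        Filter.Tendsto (f u s) (nhdsWithin 1 (Set.Iio 1))
          (nhds (Real.log (Real.exp 1 * (1 - u) ^ (s/2) / 2)))) := by
  obtain ⟨hu0, hu1⟩ := hu
  constructor
  · -- Part 1
    have hslope : Tendsto (fun x : ℝ => Real.log ((1 + x) / (1 - x)) / x)
        (nhdsWithin 0 (Set.Ioi 0)) (nhds 2) := by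
      have hd : HasDerivAt (fun x : ℝ => Real.log ((1 + x) / (1 - x))) 2 0 := by
        have h1 : HasDerivAt (fun x : ℝ => (1 + x) / (1 - x)) 2 0 := by
          have := (((hasDerivAt_id (0:ℝ)).const_add 1).div
            ((hasDerivAt_id (0:ℝ)).const_sub 1) (by norm_num))
          exact this.congr_deriv (by norm_num)
        have := h1.log (by norm_num)
        convert this using 1
        norm_num
      have h2 : Tendsto (slope (fun x : ℝ => Real.log ((1 + x) / (1 - x))) 0)
          (nhdsWithin 0 (Set.Ioi 0)) (nhds 2) :=
        (hasDerivAt_iff_tendsto_slope.1 hd).mono_left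
          (nhdsWithin_mono _ (fun x hx => ne_of_gt hx))
      refine h2.congr (fun x => ?_)
      simp [slope_def_field]
    have h2 : Tendsto (fun x : ℝ => (1/2) * Real.log (1 - x ^ 2))
        (nhdsWithin 0 (Set.Ioi 0)) (nhds 0) := by
      have hc : ContinuousAt (fun x : ℝ => (1/2) * Real.log (1 - x ^ 2)) 0 := by
        refine continuousAt_const.mul (ContinuousAt.log (by fun_prop) (by norm_num))
      have := hc.tendsto.mono_left (nhdsWithin_le_nhds (s := Set.Ioi 0))
      simpa using this
    have h3 : Tendsto (fun x : ℝ => (s/2) * Real.log (1 - u * x ^ 2))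
        (nhdsWithin 0 (Set.Ioi 0)) (nhds 0) := by
      have hc : ContinuousAt (fun x : ℝ => (s/2) * Real.log (1 - u * x ^ 2)) 0 := by
        refine continuousAt_const.mul (ContinuousAt.log (by fun_prop) (by norm_num))
      have := hc.tendsto.mono_left (nhdsWithin_le_nhds (s := Set.Ioi 0))
      simpa using this
    have main := ((((tendsto_const_nhds (x := (1:ℝ))).sub (hslope.const_mul (1/2))).sub h2).add h3)
    norm_num at main
    refine main.congr (fun x => ?_)
    unfold f
    ring
  · -- Part 2
    intro hu1'
    have h1u : (0:ℝ) < 1 - u := by linarith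
    -- rewrite the limit value
    have hval : Real.log (Real.exp 1 * (1 - u) ^ (s/2) / 2)
        = 1 - Real.log 2 + (0 + s/2 * Real.log (1 - u)) := by
      rw [Real.log_div (by positivity) (by norm_num),
        Real.log_mul (Real.exp_ne_zero 1) (by positivity),
        Real.log_exp, Real.log_rpow h1u]
      ring
    rw [hval]
    -- pieces
    have hA : Tendsto (fun x : ℝ => 1 - (1/(2*x) + 1/2) * Real.log (1 + x))
        (nhdsWithin 1 (Set.Iio 1)) (nhds (1 - Real.log 2)) := by
      have hc : ContinuousAt (fun x : ℝ => 1 - (1/(2*x) + 1/2) * Real.log (1 + x)) 1 := by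
        refine continuousAt_const.sub (ContinuousAt.mul
          ((continuousAt_const.div (by fun_prop) (by norm_num)).add continuousAt_const)
          (ContinuousAt.log (by fun_prop) (by norm_num)))
      have := hc.tendsto.mono_left (nhdsWithin_le_nhds (s := Set.Iio 1))
      norm_num at this
      convert this using 2
      norm_num
    have hB : Tendsto (fun x : ℝ => ((1 - x)/(2*x)) * Real.log (1 - x))
        (nhdsWithin 1 (Set.Iio 1)) (nhds 0) := by
      have hmap : Tendsto (fun x : ℝ => 1 - x) (nhdsWithin 1 (Set.Iio 1))
          (nhdsWithin 0 (Set.Ioi 0)) := by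
        apply tendsto_nhdsWithin_of_tendsto_nhds_of_eventually_within _
        · have : ContinuousAt (fun x : ℝ => 1 - x) 1 := by fun_prop
          have := this.tendsto.mono_left (nhdsWithin_le_nhds (s := Set.Iio 1))
          simpa using this
        · filter_upwards [self_mem_nhdsWithin] with x hx
          simp only [Set.mem_Iio] at hx
          simpa using hx
      have hlog : Tendsto (fun t : ℝ => Real.log t * t) (nhdsWithin 0 (Set.Ioi 0))
          (nhds 0) := by
        have := tendsto_log_mul_rpow_nhdsGT_zero (r := 1) one_pos
        refine this.congr' ?_
        filter_upwards [self_mem_nhdsWithin] with t ht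
        rw [Real.rpow_one]
      have hcomp : Tendsto (fun x : ℝ => Real.log (1 - x) * (1 - x))
          (nhdsWithin 1 (Set.Iio 1)) (nhds 0) := hlog.comp hmap
      have hinv : Tendsto (fun x : ℝ => 1/(2*x)) (nhdsWithin 1 (Set.Iio 1))
          (nhds (1/2)) := by
        have hc : ContinuousAt (fun x : ℝ => 1/(2*x)) 1 :=
          continuousAt_const.div (by fun_prop) (by norm_num)
        have := hc.tendsto.mono_left (nhdsWithin_le_nhds (s := Set.Iio 1))
        norm_num at this
        exact this.congr (fun x => by ring)
      have := hinv.mul hcomp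
      norm_num at this
      refine this.congr (fun x => ?_)
      ring
    have hC : Tendsto (fun x : ℝ => (s/2) * Real.log (1 - u * x ^ 2))
        (nhdsWithin 1 (Set.Iio 1)) (nhds ((s/2) * Real.log (1 - u))) := by
      have hc : ContinuousAt (fun x : ℝ => (s/2) * Real.log (1 - u * x ^ 2)) 1 := by
        refine continuousAt_const.mul (ContinuousAt.log (by fun_prop) (by norm_num; linarith))
      have := hc.tendsto.mono_left (nhdsWithin_le_nhds (s := Set.Iio 1))
      norm_num at this ⊢
      convert this using 2
    have main := hA.add (hB.add hC)
    refine main.congr' ?_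
    filter_upwards [self_mem_nhdsWithin,
      eventually_nhdsWithin_of_eventually_nhds
        (eventually_gt_nhds (show (0:ℝ) < 1 by norm_num))] with x hx1 hx0
    simp only [Set.mem_Iio] at hx1
    have hx1' : 0 < 1 - x := by linarith
    have hx1'' : 0 < 1 + x := by linarith
    unfold f
    rw [Real.log_div (by positivity) (by positivity),
      show (1 : ℝ) - x ^ 2 = (1 + x) * (1 - x) by ring,
      Real.log_mul (by positivity) (by positivity)]
    field_simp
    ring
end

section
/- Let s ≥ 1 and u ∈ (0,1) with 3·s·u > 1. Then there exists a unique y₀ ∈ (0,1) such that h_{u,s}(y₀) = 0; moreover h_{u,s}(x) < 0 for x ∈ (0, y₀) and h_{u,s}(x) > 0 for x ∈ (y₀, 1), so that f_{u,s} is strictly decreasing on (0, y₀) and strictly increasing on (y₀, 1). -/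
noncomputable def Pq (s u t : ℝ) : ℝ := (1 - u * t) ^ 2 - s * u * (3 - u * t) * (1 - t)

lemma Pq_neg (s u t t₀ : ℝ) (hs : 1 ≤ s) (hu : 0 < u) (hu1 : u < 1)
    (hroot : Pq s u t₀ = 0) (htt : t < t₀) (ht₀ : t₀ < 1) :
    Pq s u t < 0 := by
  have key : Pq s u t * (1 - t₀) =
      -((1 - u) ^ 2 * (t₀ - t)) + (u ^ 2 * (1 - s)) * (t₀ - t) * (1 - t₀) * (1 - t) := by
    unfold Pq at hroot ⊢
    linear_combination (1 - t) * hroot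
  nlinarith [sq_nonneg (1 - u), mul_pos hu hu,
    mul_nonneg (mul_nonneg (mul_nonneg (mul_nonneg (mul_nonneg hu.le hu.le)
      (by linarith : (0:ℝ) ≤ s - 1)) (by linarith : (0:ℝ) ≤ t₀ - t))
      (by linarith : (0:ℝ) ≤ 1 - t₀)) (by linarith : (0:ℝ) ≤ 1 - t),
    mul_pos (pow_pos (by linarith : (0:ℝ) < 1-u) 2) (by linarith : (0:ℝ) < t₀ - t)]

lemma Pq_pos (s u t t₀ : ℝ) (hs : 1 ≤ s) (hu : 0 < u) (hu1 : u < 1)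
    (hroot : Pq s u t₀ = 0) (ht : t₀ < t) (htt : t < 1) :
    0 < Pq s u t := by
  have key : Pq s u t * (1 - t₀) =
      (1 - u) ^ 2 * (t - t₀) - (u ^ 2 * (1 - s)) * (t - t₀) * (1 - t) * (1 - t₀) := by
    unfold Pq at hroot ⊢
    linear_combination (1 - t) * hroot
  nlinarith [mul_nonneg (mul_nonneg (mul_nonneg (mul_nonneg (mul_nonneg hu.le hu.le)
      (by linarith : (0:ℝ) ≤ s - 1)) (by linarith : (0:ℝ) ≤ t - t₀))
      (by linarith : (0:ℝ) ≤ 1 - t)) (by linarith : (0:ℝ) ≤ 1 - t₀),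
    mul_pos (pow_pos (by linarith : (0:ℝ) < 1-u) 2) (by linarith : (0:ℝ) < t - t₀)]

lemma hasDerivAt_h (s u x : ℝ) (hu : 0 < u) (hu1 : u < 1) (hx1 : -1 < x) (hx2 : x < 1) :
    HasDerivAt (h u s)
      (x ^ 2 * Pq s u (x ^ 2) / ((1 - x ^ 2) * (1 - u * x ^ 2) ^ 2)) x := by
  have h1 : (0:ℝ) < 1 - x := by linarith
  have h2 : (0:ℝ) < 1 + x := by linarith
  have h3 : (0:ℝ) < 1 - x ^ 2 := by nlinarith
  have h4 : (0:ℝ) < 1 - u * x ^ 2 := by nlinarith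
  have dq : HasDerivAt (fun x : ℝ => (1 + x) / (1 - x))
      ((1 * (1 - x) - (1 + x) * (-1)) / (1 - x) ^ 2) x :=
    (((hasDerivAt_id x).const_add 1)).div (((hasDerivAt_id x).neg).const_add 1) h1.ne'
  have dlog : HasDerivAt (fun x : ℝ => Real.log ((1 + x) / (1 - x)))
      (((1 * (1 - x) - (1 + x) * (-1)) / (1 - x) ^ 2) / ((1 + x) / (1 - x))) x :=
    dq.log (by positivity)
  have dcube : HasDerivAt (fun x : ℝ => s * u * x ^ 3) (s * u * (3 * x ^ 2)) x := by
    simpa using ((hasDerivAt_pow 3 x).const_mul (s * u))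
  have dden : HasDerivAt (fun x : ℝ => 1 - u * x ^ 2) (-(u * (2 * x))) x := by
    simpa using (((hasDerivAt_pow 2 x).const_mul u).const_sub 1)
  have dfrac : HasDerivAt (fun x : ℝ => s * u * x ^ 3 / (1 - u * x ^ 2))
      ((s * u * (3 * x ^ 2) * (1 - u * x ^ 2) - s * u * x ^ 3 * (-(u * (2 * x)))) /
        (1 - u * x ^ 2) ^ 2) x := dcube.div dden h4.ne'
  have key := ((hasDerivAt_id x).neg.add (dlog.const_mul (1/2 : ℝ))).sub dfrac
  refine key.congr_deriv (Eq.symm ?_)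
  unfold Pq
  have h5 : (1:ℝ) - x ^ 2 * u ≠ 0 := by nlinarith
  field_simp
  ring

lemma hasDerivAt_f (s u x : ℝ) (hu : 0 < u) (hu1 : u < 1) (hx1 : 0 < x) (hx2 : x < 1) :
    HasDerivAt (f u s) (h u s x / x ^ 2) x := by
  have h1 : (0:ℝ) < 1 - x := by linarith
  have h2 : (0:ℝ) < 1 + x := by linarith
  have h3 : (0:ℝ) < 1 - x ^ 2 := by nlinarith
  have h4 : (0:ℝ) < 1 - u * x ^ 2 := by nlinarith
  have dq : HasDerivAt (fun x : ℝ => (1 + x) / (1 - x))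
      ((1 * (1 - x) - (1 + x) * (-1)) / (1 - x) ^ 2) x :=
    (((hasDerivAt_id x).const_add 1)).div (((hasDerivAt_id x).neg).const_add 1) h1.ne'
  have dlog : HasDerivAt (fun x : ℝ => Real.log ((1 + x) / (1 - x)))
      (((1 * (1 - x) - (1 + x) * (-1)) / (1 - x) ^ 2) / ((1 + x) / (1 - x))) x :=
    dq.log (by positivity)
  have dinv : HasDerivAt (fun x : ℝ => 1 / (2 * x)) (-(2) / (2 * x) ^ 2) x := by
    simpa [Pi.div_def] using (hasDerivAt_const x (1:ℝ)).div ((hasDerivAt_id x).const_mul 2)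
      (by positivity)
  have dprod : HasDerivAt (fun x : ℝ => (1 / (2 * x)) * Real.log ((1 + x) / (1 - x)))
      ((-(2) / (2 * x) ^ 2) * Real.log ((1 + x) / (1 - x))
        + (1 / (2 * x)) * (((1 * (1 - x) - (1 + x) * (-1)) / (1 - x) ^ 2) /
          ((1 + x) / (1 - x)))) x :=
    dinv.mul dlog
  have dl2 : HasDerivAt (fun x : ℝ => (1 / 2 : ℝ) * Real.log (1 - x ^ 2))
      ((1/2 : ℝ) * ((-(2 * x)) / (1 - x ^ 2))) x := by
    have : HasDerivAt (fun x : ℝ => 1 - x ^ 2) (-(2 * x)) x := by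
      simpa using (hasDerivAt_pow 2 x).const_sub 1
    exact (this.log h3.ne').const_mul _
  have dl3 : HasDerivAt (fun x : ℝ => (s / 2 : ℝ) * Real.log (1 - u * x ^ 2))
      ((s/2 : ℝ) * ((-(u * (2 * x))) / (1 - u * x ^ 2))) x := by
    have : HasDerivAt (fun x : ℝ => 1 - u * x ^ 2) (-(u * (2 * x))) x := by
      simpa using ((hasDerivAt_pow 2 x).const_mul u).const_sub 1
    exact (this.log h4.ne').const_mul _
  have key := (((hasDerivAt_const x (1:ℝ)).sub dprod).sub dl2).add dl3
  refine key.congr_deriv (Eq.symm ?_)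
  show h u s x / x ^ 2 = _
  rw [h]
  field_simp
  ring


lemma h_pos_near_one (s u y : ℝ) (hs : 1 ≤ s) (hu0 : 0 < u) (hu1 : u < 1)
    (hy1 : (Real.exp (2 * (2 + s * u / (1 - u))) - 1) /
      (Real.exp (2 * (2 + s * u / (1 - u))) + 1) ≤ y) (hy2 : y < 1) :
    0 < h u s y := by
  have hsu : 0 < s * u := by positivity
  have h4' : (0:ℝ) < 1 - u := by linarith
  set M : ℝ := 2 + s * u / (1 - u) with hMdef
  have hM : 0 < M := by
    have h5 : 0 < s * u / (1 - u) := div_pos hsu h4'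
    rw [hMdef]; linarith
  set c : ℝ := Real.exp (2 * M) with hcdef
  have hc1 : 1 < c := by
    rw [hcdef]
    calc (1:ℝ) = Real.exp 0 := by simp
    _ < Real.exp (2 * M) := Real.exp_lt_exp.mpr (by linarith)
  set z₀ : ℝ := (c - 1) / (c + 1) with hz₀def
  have hz₀0 : 0 < z₀ := div_pos (by linarith) (by linarith)
  have hz₀1 : z₀ < 1 := by
    rw [hz₀def, div_lt_one (by linarith)]; linarith
  have hy0 : 0 < y := lt_of_lt_of_le hz₀0 hy1
  have hyy : 0 < 1 - y := by linarith
  have h4 : (0:ℝ) < 1 - u * y ^ 2 := by nlinarith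
  have hq : c ≤ (1 + y) / (1 - y) := by
    rw [le_div_iff₀ hyy]
    have hc' : c * (1 - z₀) = 1 + z₀ := by
      rw [hz₀def]
      field_simp
      ring
    calc c * (1 - y) ≤ c * (1 - z₀) :=
          mul_le_mul_of_nonneg_left (by linarith) (by linarith)
    _ = 1 + z₀ := hc'
    _ ≤ 1 + y := by linarith
  have hlog : 2 * M ≤ Real.log ((1 + y) / (1 - y)) := by
    calc 2 * M = Real.log c := by rw [hcdef, Real.log_exp]
    _ ≤ Real.log ((1 + y) / (1 - y)) := Real.log_le_log (by positivity) hq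
  have hfrac : s * u * y ^ 3 / (1 - u * y ^ 2) ≤ s * u / (1 - u) := by
    rw [div_le_div_iff₀ h4 h4']
    nlinarith [mul_pos hsu (mul_pos hyy
      (show 0 < 1 + y + y ^ 2 - u * y ^ 2 by nlinarith))]
  rw [h]
  have hMle : s * u / (1 - u) = M - 2 := by rw [hMdef]; ring
  linarith [hlog, hfrac, hy2]

theorem stmt_17 (s u : ℝ) (hs : 1 ≤ s) (hu : u ∈ Set.Ioo (0:ℝ) 1)
    (h3su : 1 < 3 * s * u) :
    ∃ y₀ ∈ Set.Ioo (0:ℝ) 1, h u s y₀ = 0 ∧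
      (∀ y ∈ Set.Ioo (0:ℝ) 1, h u s y = 0 → y = y₀) ∧
      (∀ x ∈ Set.Ioo (0:ℝ) y₀, h u s x < 0) ∧
      (∀ x ∈ Set.Ioo y₀ (1:ℝ), 0 < h u s x) ∧
      StrictAntiOn (f u s) (Set.Ioo (0:ℝ) y₀) ∧
      StrictMonoOn (f u s) (Set.Ioo y₀ (1:ℝ)) := by
  obtain ⟨hu0, hu1⟩ := hu
  have hsu : 0 < s * u := by positivity
  -- the root t₀ of Pq
  have P0 : Pq s u 0 < 0 := by unfold Pq; nlinarith
  have P1 : 0 < Pq s u 1 := by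
    have : Pq s u 1 = (1 - u)^2 := by unfold Pq; ring
    rw [this]; exact pow_pos (by linarith) 2
  have Pcont : ContinuousOn (Pq s u) (Set.Icc 0 1) := by
    unfold Pq; fun_prop
  obtain ⟨t₀, ht₀mem, ht₀⟩ : ∃ t₀ ∈ Set.Icc (0:ℝ) 1, Pq s u t₀ = 0 := by
    have := intermediate_value_Icc (by norm_num : (0:ℝ) ≤ 1) Pcont
      (Set.mem_Icc.mpr ⟨P0.le, P1.le⟩)
    obtain ⟨t₀, ht₀mem, ht₀⟩ := this
    exact ⟨t₀, ht₀mem, ht₀⟩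
  have ht₀0 : 0 < t₀ := by
    rcases lt_or_eq_of_le ht₀mem.1 with hlt | heq
    · exact hlt
    · exfalso; rw [← heq] at ht₀; linarith
  have ht₀1 : t₀ < 1 := by
    rcases lt_or_eq_of_le ht₀mem.2 with hlt | heq
    · exact hlt
    · exfalso; rw [heq] at ht₀; linarith
  set x₁ := Real.sqrt t₀ with hx₁def
  have hx₁sq : x₁ ^ 2 = t₀ := Real.sq_sqrt ht₀0.le
  have hx₁0 : 0 < x₁ := Real.sqrt_pos.mpr ht₀0
  have hx₁1 : x₁ < 1 := by
    nlinarith [hx₁sq]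
  -- derivative facts
  have hderiv : ∀ x : ℝ, -1 < x → x < 1 →
      deriv (h u s) x = x ^ 2 * Pq s u (x ^ 2) / ((1 - x ^ 2) * (1 - u * x ^ 2) ^ 2) :=
    fun x hx1 hx2 => (hasDerivAt_h s u x hu0 hu1 hx1 hx2).deriv
  have hcont : ∀ x : ℝ, -1 < x → x < 1 → ContinuousAt (h u s) x :=
    fun x hx1 hx2 => (hasDerivAt_h s u x hu0 hu1 hx1 hx2).continuousAt
  have hdenpos : ∀ x : ℝ, -1 < x → x < 1 →
      0 < (1 - x ^ 2) * (1 - u * x ^ 2) ^ 2 := by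
    intro x hx1 hx2
    have h3 : (0:ℝ) < 1 - x ^ 2 := by nlinarith
    have h4 : (0:ℝ) < 1 - u * x ^ 2 := by nlinarith
    positivity
  -- h strictly decreasing on [0, x₁]
  have hanti : StrictAntiOn (h u s) (Set.Icc 0 x₁) := by
    apply strictAntiOn_of_deriv_neg (convex_Icc 0 x₁)
    · intro x hx
      exact (hcont x (by linarith [hx.1]) (by linarith [hx.2])).continuousWithinAt
    · intro x hx
      rw [interior_Icc] at hx
      obtain ⟨hxa, hxb⟩ := hx
      have hx1 : (-1:ℝ) < x := by linarith
      have hx2 : x < 1 := by linarith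
      rw [hderiv x hx1 hx2]
      have hsqlt : x ^ 2 < t₀ := by
        rw [← hx₁sq]
        exact pow_lt_pow_left₀ hxb hxa.le (by norm_num)
      have hPneg := Pq_neg s u (x^2) t₀ hs hu0 hu1 ht₀ hsqlt ht₀1
      have := hdenpos x hx1 hx2
      have hxsq : 0 < x ^ 2 := by positivity
      exact div_neg_of_neg_of_pos (by nlinarith) this
  -- h strictly increasing on [x₁, 1)
  have hmono : StrictMonoOn (h u s) (Set.Ico x₁ 1) := by
    apply strictMonoOn_of_deriv_pos (convex_Ico x₁ 1)
    · intro x hx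
      exact (hcont x (by linarith [hx.1]) hx.2).continuousWithinAt
    · intro x hx
      rw [interior_Ico] at hx
      obtain ⟨hxa, hxb⟩ := hx
      have hx1 : (-1:ℝ) < x := by linarith
      rw [hderiv x hx1 hxb]
      have hxpos : 0 < x := lt_trans hx₁0 hxa
      have hsqgt : t₀ < x ^ 2 := by
        rw [← hx₁sq]
        exact pow_lt_pow_left₀ hxa hx₁0.le (by norm_num)
      have hsqlt : x ^ 2 < 1 := by nlinarith
      have hPpos := Pq_pos s u (x^2) t₀ hs hu0 hu1 ht₀ hsqgt hsqlt
      have := hdenpos x hx1 hxb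
      have hxsq : 0 < x ^ 2 := by positivity
      exact div_pos (by nlinarith) this
  have h0 : h u s 0 = 0 := by simp [h]
  have hx₁neg : h u s x₁ < 0 := by
    have := hanti (Set.mem_Icc.mpr ⟨le_refl 0, hx₁0.le⟩)
      (Set.mem_Icc.mpr ⟨hx₁0.le, le_refl x₁⟩) hx₁0
    rwa [h0] at this
  -- a point z with h z > 0
  set z₀ : ℝ := (Real.exp (2 * (2 + s * u / (1 - u))) - 1) /
      (Real.exp (2 * (2 + s * u / (1 - u))) + 1) with hz₀def
  have hc1 : 1 < Real.exp (2 * (2 + s * u / (1 - u))) := by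
    have h5 : 0 < s * u / (1 - u) := div_pos hsu (by linarith)
    calc (1:ℝ) = Real.exp 0 := by simp
    _ < _ := Real.exp_lt_exp.mpr (by linarith)
  have hz₀0 : 0 < z₀ := div_pos (by linarith) (by linarith)
  have hz₀1 : z₀ < 1 := by
    rw [hz₀def, div_lt_one (by linarith)]; linarith
  have hzbig : ∀ y : ℝ, z₀ ≤ y → y < 1 → 0 < h u s y := fun y hy1 hy2 =>
    h_pos_near_one s u y hs hu0 hu1 hy1 hy2
  set z : ℝ := max z₀ ((x₁ + 1) / 2) with hzdef
  have hzx₁ : x₁ < z := lt_of_lt_of_le (by linarith) (le_max_right _ _)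
  have hz1 : z < 1 := by
    rw [hzdef]
    apply max_lt hz₀1 (by linarith)
  have hzpos : 0 < h u s z := hzbig z (le_max_left _ _) hz1
  -- IVT on [x₁, z]
  obtain ⟨y₀, hy₀mem, hy₀⟩ : ∃ y₀ ∈ Set.Icc x₁ z, h u s y₀ = 0 := by
    have hcont' : ContinuousOn (h u s) (Set.Icc x₁ z) := by
      intro x hx
      exact (hcont x (by linarith [hx.1]) (by linarith [hx.2])).continuousWithinAt
    have := intermediate_value_Icc hzx₁.le hcont'
      (Set.mem_Icc.mpr ⟨hx₁neg.le, hzpos.le⟩)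
    obtain ⟨y₀, hy₀mem, hy₀⟩ := this
    exact ⟨y₀, hy₀mem, hy₀⟩
  have hy₀x₁ : x₁ < y₀ := by
    rcases lt_or_eq_of_le hy₀mem.1 with hlt | heq
    · exact hlt
    · exfalso; rw [← heq] at hy₀; linarith
  have hy₀1 : y₀ < 1 := lt_of_le_of_lt hy₀mem.2 hz1
  have hy₀0 : 0 < y₀ := lt_trans hx₁0 hy₀x₁
  -- sign facts
  have hneg : ∀ x ∈ Set.Ioo (0:ℝ) y₀, h u s x < 0 := by
    intro x hx
    obtain ⟨hxa, hxb⟩ := hx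
    rcases le_or_gt x x₁ with hle | hgt
    · have := hanti (Set.mem_Icc.mpr ⟨le_refl 0, by linarith⟩)
        (Set.mem_Icc.mpr ⟨hxa.le, hle⟩) hxa
      rwa [h0] at this
    · have := hmono (Set.mem_Ico.mpr ⟨hgt.le, by linarith⟩)
        (Set.mem_Ico.mpr ⟨hy₀x₁.le, hy₀1⟩) hxb
      rwa [hy₀] at this
  have hpos : ∀ x ∈ Set.Ioo y₀ (1:ℝ), 0 < h u s x := by
    intro x hx
    obtain ⟨hxa, hxb⟩ := hx
    have := hmono (Set.mem_Ico.mpr ⟨hy₀x₁.le, hy₀1⟩)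
      (Set.mem_Ico.mpr ⟨by linarith, hxb⟩) hxa
    rwa [hy₀] at this
  refine ⟨y₀, ⟨hy₀0, hy₀1⟩, hy₀, ?_, hneg, hpos, ?_, ?_⟩
  · intro y hy hyzero
    rcases lt_trichotomy y y₀ with hlt | heq | hgt
    · exfalso
      have := hneg y ⟨hy.1, hlt⟩
      linarith
    · exact heq
    · exfalso
      have := hpos y ⟨hgt, hy.2⟩
      linarith
  · apply strictAntiOn_of_deriv_neg (convex_Ioo 0 y₀)
    · intro x hx
      exact (hasDerivAt_f s u x hu0 hu1 hx.1 (lt_trans hx.2 hy₀1)).continuousAt.continuousWithinAt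
    · intro x hx
      rw [interior_Ioo] at hx
      rw [(hasDerivAt_f s u x hu0 hu1 hx.1 (lt_trans hx.2 hy₀1)).deriv]
      have hxsq : 0 < x ^ 2 := pow_pos hx.1 2
      exact div_neg_of_neg_of_pos (hneg x hx) hxsq
  · apply strictMonoOn_of_deriv_pos (convex_Ioo y₀ 1)
    · intro x hx
      exact (hasDerivAt_f s u x hu0 hu1 (lt_trans hy₀0 hx.1) hx.2).continuousAt.continuousWithinAt
    · intro x hx
      rw [interior_Ioo] at hx
      rw [(hasDerivAt_f s u x hu0 hu1 (lt_trans hy₀0 hx.1) hx.2).deriv]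
      have hxsq : 0 < x ^ 2 := pow_pos (lt_trans hy₀0 hx.1) 2
      exact div_pos (hpos x hx) hxsq
end
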